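/- arXiv:2207.02617 — 3 statements merged into one kernel-verified Lean document; each statement's English description precedes it below -/
import Mathlib

section
/- Given n, λ, Λ, c_U and α, there exist a bounded function Φ : ℝⁿ → [0,∞) and a bounded nonnegative function ψ : ℝⁿ → [0,∞) supported in the closed ball B̄_{1/4} such that for every ν satisfying condition (A): (i) Φ = 0 on ℝⁿ ∖ B_{2√n}; (ii) Φ ≥ 2 on the cube 𝒬₃; (iii) for every x ∈ ℝⁿ one has ∫_{ℝⁿ} Λ δ(Φ,x,y)⁻ ν(x,|y|) dy < ∞ and M⁻_ν Φ(x) := ∫_{ℝⁿ} (λ δ(Φ,x,y)⁺ − Λ δ(Φ,x,y)⁻) ν(x,|y|) dy ≥ −ψ(x) (the value +∞ being allowed on the left-hand side). -/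
open MeasureTheory Metric Set
open scoped ENNReal

noncomputable section

/-- Euclidean space `ℝⁿ`. -/
abbrev Eucl (n : ℕ) := EuclideanSpace ℝ (Fin n)

/-- Second-order difference `δ(u,x,y) = u(x+y) + u(x−y) − 2u(x)`. -/
def delta2 (n : ℕ) (u : Eucl n → ℝ) (x y : Eucl n) : ℝ :=
  u (x + y) + u (x - y) - 2 * u x

/-- `h(x,r) = ∫ min(1, |y|²/r²) ν(x,|y|) dy`. -/
def hfun (n : ℕ) (ν : Eucl n → ℝ → ℝ) (x : Eucl n) (r : ℝ) : ℝ :=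
  ∫ y : Eucl n, min 1 (‖y‖ ^ 2 / r ^ 2) * ν x ‖y‖

/-- `K(x,r) = r⁻² ∫_{|y|<r} |y|² ν(x,|y|) dy`. -/
def Kfun (n : ℕ) (ν : Eucl n → ℝ → ℝ) (x : Eucl n) (r : ℝ) : ℝ :=
  (∫ y in Metric.ball (0 : Eucl n) r, ‖y‖ ^ 2 * ν x ‖y‖) / r ^ 2

/-- Standing assumptions on the kernel: measurability, nonnegativity,
integrability of `min(1,|y|²) ν(x,|y|)`. -/
def KernelOK (n : ℕ) (ν : Eucl n → ℝ → ℝ) : Prop :=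
  Measurable (Function.uncurry ν) ∧ (∀ x r, 0 < r → 0 ≤ ν x r) ∧
    ∀ x : Eucl n, Integrable (fun y : Eucl n => min 1 (‖y‖ ^ 2) * ν x ‖y‖)

/-- (A1) `h(x,1) = 1`. -/
def CondA1 (n : ℕ) (ν : Eucl n → ℝ → ℝ) : Prop := ∀ x, hfun n ν x 1 = 1

/-- (A2) `r ↦ ν(x,r)` is nonincreasing. -/
def CondA2 (n : ℕ) (ν : Eucl n → ℝ → ℝ) : Prop :=
  ∀ (x : Eucl n) (s r : ℝ), 0 < s → s ≤ r → ν x r ≤ ν x s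

/-- (A3) the weak scaling condition. -/
def CondA3 (n : ℕ) (ν : Eucl n → ℝ → ℝ) (cU α : ℝ) : Prop :=
  ∀ (x : Eucl n) (r t : ℝ), 0 < r → 1 ≤ t →
    hfun n ν x (t * r) ≤ cU * t ^ (-α) * hfun n ν x r

/-- Condition (A). -/
def CondA (n : ℕ) (ν : Eucl n → ℝ → ℝ) (cU α : ℝ) : Prop :=
  CondA1 n ν ∧ CondA2 n ν ∧ CondA3 n ν cU α

/-- Condition (B): `ν(x₁,r)/h(x₁,s) ≤ c* ν(x₂,r)/h(x₂,s)` for `|x₁−x₂| ≤ s ≤ r`. -/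
def CondB (n : ℕ) (ν : Eucl n → ℝ → ℝ) (cs : ℝ) : Prop :=
  ∀ (x₁ x₂ : Eucl n) (s r : ℝ), 0 < s → dist x₁ x₂ ≤ s → s ≤ r →
    ν x₁ r * hfun n ν x₂ s ≤ cs * (ν x₂ r * hfun n ν x₁ s)

/-- Maximal Pucci-type operator `M⁺_ν`. -/
def Mplus (n : ℕ) (lam Lam : ℝ) (ν : Eucl n → ℝ → ℝ) (u : Eucl n → ℝ) (x : Eucl n) : ℝ :=
  ∫ y : Eucl n, (Lam * max (delta2 n u x y) 0 - lam * max (-delta2 n u x y) 0) * ν x ‖y‖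

/-- Minimal Pucci-type operator `M⁻_ν`. -/
def Mminus (n : ℕ) (lam Lam : ℝ) (ν : Eucl n → ℝ → ℝ) (u : Eucl n → ℝ) (x : Eucl n) : ℝ :=
  ∫ y : Eucl n, (lam * max (delta2 n u x y) 0 - Lam * max (-delta2 n u x y) 0) * ν x ‖y‖

/-- `C^{1,1}` regularity on a set: differentiable with Lipschitz derivative. -/
def C11On (n : ℕ) (φ : Eucl n → ℝ) (s : Set (Eucl n)) : Prop :=
  DifferentiableOn ℝ φ s ∧
    ∃ L : NNReal, LipschitzOnWith L (fun x => fderivWithin ℝ φ s x) s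

open Classical in
/-- The test function: `φ` on `N`, `u` elsewhere. -/
def replaceOn (n : ℕ) (u φ : Eucl n → ℝ) (N : Set (Eucl n)) : Eucl n → ℝ :=
  fun y => if y ∈ N then φ y else u y

/-- Boundedness on all of `ℝⁿ`. -/
def IsBdd (n : ℕ) (u : Eucl n → ℝ) : Prop := ∃ M, ∀ x, |u x| ≤ M

/-- Viscosity subsolution of `M⁺_ν u = g` in `Ω`. -/
def IsViscositySubsol (n : ℕ) (lam Lam : ℝ) (ν : Eucl n → ℝ → ℝ) (u g : Eucl n → ℝ)
    (Ω : Set (Eucl n)) : Prop :=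
  ∀ x ∈ Ω, ∀ N : Set (Eucl n), IsOpen N → x ∈ N → N ⊆ Ω →
    ∀ φ : Eucl n → ℝ, C11On n φ (closure N) → φ x = u x → (∀ y ∈ N, u y ≤ φ y) →
      g x ≤ Mplus n lam Lam ν (replaceOn n u φ N) x

/-- Viscosity supersolution of `M⁻_ν u = g` in `Ω`. -/
def IsViscositySupersol (n : ℕ) (lam Lam : ℝ) (ν : Eucl n → ℝ → ℝ) (u g : Eucl n → ℝ)
    (Ω : Set (Eucl n)) : Prop :=
  ∀ x ∈ Ω, ∀ N : Set (Eucl n), IsOpen N → x ∈ N → N ⊆ Ω →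
    ∀ φ : Eucl n → ℝ, C11On n φ (closure N) → φ x = u x → (∀ y ∈ N, φ y ≤ u y) →
      Mminus n lam Lam ν (replaceOn n u φ N) x ≤ g x

/-- Open axis-parallel cube `𝒬_l(x)` with center `x` and side length `l`. -/
def cube (n : ℕ) (x : Eucl n) (l : ℝ) : Set (Eucl n) :=
  {y | ∀ i, |y i - x i| < l / 2}

section BarrierProof
open scoped RealInnerProductSpace

/-! ### auxiliary lemmas -/

section BarrierAux

open scoped RealInnerProductSpace

lemma barrier_cosh_ge_exp_abs_half (w : ℝ) : Real.exp |w| / 2 ≤ Real.cosh w := by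
  rw [← Real.cosh_abs, Real.cosh_eq]; have := Real.exp_pos (-|w|); linarith

lemma barrier_cosh_ge_one_add_sq_half (w : ℝ) : 1 + w ^ 2 / 2 ≤ Real.cosh w := by
  have h1 : Real.cosh w = 1 + 2 * Real.sinh (w / 2) ^ 2 := by
    have h2 := Real.cosh_sq (w / 2)
    have h4 : Real.cosh (2 * (w / 2)) = Real.cosh (w/2) ^2 + Real.sinh (w/2)^2 :=
      Real.cosh_two_mul _
    rw [show 2 * (w / 2) = w by ring] at h4
    rw [h4, h2]; ring
  have h3 : (w / 2) ^ 2 ≤ Real.sinh (w / 2) ^ 2 := by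
    rcases le_or_gt 0 w with h | h
    · have hs : w / 2 ≤ Real.sinh (w / 2) := Real.self_le_sinh_iff.2 (by linarith)
      nlinarith
    · have h0 : (0:ℝ) ≤ -(w / 2) := by linarith
      have hs : -(w / 2) ≤ Real.sinh (-(w / 2)) := Real.self_le_sinh_iff.2 h0
      rw [Real.sinh_neg] at hs; nlinarith
  nlinarith [h1, h3]

/-- the normalized second-difference kernel of the Gaussian -/
def Efun (β : ℝ) {n : ℕ} (x y : Eucl n) : ℝ :=
  Real.exp (-(β * ‖y‖ ^ 2)) * Real.cosh (2 * β * ⟪x, y⟫) - 1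

lemma barrier_gauss_identity (β : ℝ) {n : ℕ} (x y : Eucl n) :
    Real.exp (-(β * ‖x + y‖ ^ 2)) + Real.exp (-(β * ‖x - y‖ ^ 2))
      = 2 * Real.exp (-(β * ‖x‖ ^ 2)) * (Efun β x y + 1) := by
  rw [norm_add_sq_real, norm_sub_sq_real, Efun, Real.cosh_eq]
  rw [show -(β * (‖x‖ ^ 2 + 2 * ⟪x, y⟫ + ‖y‖ ^ 2))
      = (-(β * ‖x‖^2)) + (-(β * ‖y‖^2)) + (-(2*β*⟪x,y⟫)) by ring]
  rw [show -(β * (‖x‖ ^ 2 - 2 * ⟪x, y⟫ + ‖y‖ ^ 2))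
      = (-(β * ‖x‖^2)) + (-(β * ‖y‖^2)) + (2*β*⟪x,y⟫) by ring]
  rw [Real.exp_add, Real.exp_add, Real.exp_add, Real.exp_add, Real.exp_neg]
  ring

/-- lower bound for the second difference of the truncated Gaussian -/
lemma barrier_delta_ge (a β c : ℝ) (ha : 0 ≤ a) {n : ℕ} (x y : Eucl n)
    (hx : c ≤ Real.exp (-(β * ‖x‖ ^ 2))) :
    2 * a * Real.exp (-(β * ‖x‖ ^ 2)) * Efun β x y
      ≤ delta2 n (fun z => a * max (Real.exp (-(β * ‖z‖ ^ 2)) - c) 0) x y := by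
  have h1 : ∀ z : Eucl n, a * (Real.exp (-(β * ‖z‖ ^ 2)) - c)
      ≤ a * max (Real.exp (-(β * ‖z‖ ^ 2)) - c) 0 :=
    fun z => mul_le_mul_of_nonneg_left (le_max_left _ _) ha
  have h2 : a * max (Real.exp (-(β * ‖x‖ ^ 2)) - c) 0
      = a * (Real.exp (-(β * ‖x‖ ^ 2)) - c) := by
    rw [max_eq_left (by linarith)]
  unfold delta2
  dsimp only
  rw [h2]
  have h3 := h1 (x + y)
  have h4 := h1 (x - y)
  have h5 := barrier_gauss_identity β x y
  nlinarith [h3, h4]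

lemma barrier_Efun_ge_neg_min (β : ℝ) (hβ : 0 ≤ β) {n : ℕ} (x y : Eucl n) :
    -min 1 (β * ‖y‖ ^ 2) ≤ Efun β x y := by
  have h1 : (1:ℝ) ≤ Real.cosh (2*β*⟪x,y⟫) := Real.one_le_cosh _
  have h2 : Real.exp (-(β * ‖y‖^2)) ≤ Real.exp (-(β * ‖y‖^2)) * Real.cosh (2*β*⟪x,y⟫) := by
    nlinarith [Real.exp_pos (-(β * ‖y‖^2))]
  have h3 : 1 - β * ‖y‖^2 ≤ Real.exp (-(β * ‖y‖^2)) := by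
    have := Real.add_one_le_exp (-(β * ‖y‖^2)); linarith
  have h4 : (0:ℝ) < Real.exp (-(β * ‖y‖^2)) := Real.exp_pos _
  unfold Efun
  rcases le_total (1:ℝ) (β * ‖y‖^2) with h | h
  · rw [min_eq_left h]; nlinarith
  · rw [min_eq_right h]; nlinarith

/-- positivity of `Efun` in the sector -/
lemma barrier_Efun_pos {nr lam Lam β s t : ℝ} (hn : 1 ≤ nr) (hlam : 0 < lam) (hll : lam ≤ Lam)
    (hβ : 16 * nr * (2 * (2 * nr * Lam / lam) + 2) * (2 * nr * Lam / lam + 1) ≤ β)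
    (hs : 0 ≤ s) (ht1 : s / 16 ≤ nr * t ^ 2) (ht2 : s ≤ |t|) :
    2 * nr * Lam * min 1 (β * s)
      ≤ lam * max (Real.exp (-(β * s)) * Real.cosh (2 * β * t) - 1) 0 := by
  obtain ⟨κ, hκ⟩ : ∃ k : ℝ, k = 2 * nr * Lam / lam := ⟨_, rfl⟩
  rw [← hκ] at hβ
  have hκ2 : 2 ≤ κ := by
    rw [hκ, le_div_iff₀ hlam]; nlinarith
  have hβpos : 0 < β := by
    have p1 : (0:ℝ) < 16 * nr := by linarith
    have p2 : (0:ℝ) < 2 * κ + 2 := by linarith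
    have p3 : (0:ℝ) < κ + 1 := by linarith
    nlinarith [mul_pos (mul_pos p1 p2) p3]
  have hst : s ≤ 16 * (nr * t ^ 2) := by linarith
  have he2 : 16 * nr * (κ + 1) ≤ β := by nlinarith
  have hE : κ * min 1 (β * s) ≤ Real.exp (-(β * s)) * Real.cosh (2 * β * t) - 1 := by
    have hcosh1 : 1 + 2 * β ^ 2 * t ^ 2 ≤ Real.cosh (2 * β * t) := by
      have := barrier_cosh_ge_one_add_sq_half (2 * β * t)
      nlinarith
    rcases le_total (β * s) (1/2) with hσ | hσ
    · rw [min_eq_right (by linarith)]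
      have he : 1 - β * s ≤ Real.exp (-(β * s)) := by
        have := Real.add_one_le_exp (-(β * s)); linarith
      have hβt : (κ + 1) * (β * s) ≤ β ^ 2 * t ^ 2 := by
        have q1 : β * s * (16 * nr * (κ+1)) ≤ β * s * β := by
          apply mul_le_mul_of_nonneg_left he2 (by positivity)
        have q2 : β ^ 2 * s ≤ β ^ 2 * (16 * (nr * t ^ 2)) := by
          apply mul_le_mul_of_nonneg_left hst (by positivity)
        nlinarith [q1, q2, sq_nonneg β, sq_nonneg t, mul_pos hβpos hβpos]
      have hB0 : (0:ℝ) ≤ 1 + 2 * β ^ 2 * t ^ 2 := by positivity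
      have hAB : (1 - β * s) * (1 + 2 * β ^ 2 * t ^ 2)
          ≤ Real.exp (-(β * s)) * Real.cosh (2 * β * t) :=
        mul_le_mul he hcosh1 hB0 (Real.exp_pos _).le
      nlinarith [hAB, hβt, sq_nonneg (β * t)]
    · have hmin : min 1 (β * s) ≤ 1 := min_le_left _ _
      have hmain : κ ≤ Real.exp (-(β * s)) * Real.cosh (2 * β * t) - 1 := by
        rcases le_total (Real.exp (β * s)) (2 * κ + 2) with he | he
        · have hinv : 1 / (2 * κ + 2) ≤ Real.exp (-(β * s)) := by
            rw [Real.exp_neg, ← one_div]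
            exact one_div_le_one_div_of_le (Real.exp_pos _) he
          have hq : (2 * κ + 2) * (κ + 1) ≤ 2 * β ^ 2 * t ^ 2 := by
            have q3 : β * 1 ≤ β * (2 * (β * s)) :=
              mul_le_mul_of_nonneg_left (by linarith) hβpos.le
            have q4 : 2 * β ^ 2 * s ≤ 2 * β ^ 2 * (16 * (nr * t ^ 2)) := by
              apply mul_le_mul_of_nonneg_left hst (by positivity)
            have q5 : 16 * nr * ((2 * κ + 2) * (κ + 1)) ≤ β := by linarith [hβ]
            have q6 : 16 * nr * ((2 * κ + 2) * (κ + 1)) ≤ 16 * nr * (2 * β ^ 2 * t ^ 2) := by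
              calc 16 * nr * ((2 * κ + 2) * (κ + 1)) ≤ β := q5
                _ ≤ 2 * β ^ 2 * s := by nlinarith [q3]
                _ ≤ 2 * β ^ 2 * (16 * (nr * t ^ 2)) := q4
                _ = 16 * nr * (2 * β ^ 2 * t ^ 2) := by ring
            exact le_of_mul_le_mul_left q6 (by linarith : (0:ℝ) < 16 * nr)
          have hcd : (2 * κ + 2) * (κ + 1) ≤ Real.cosh (2 * β * t) := by
            have : 2 * β ^ 2 * t ^ 2 ≤ 1 + 2 * β ^ 2 * t ^ 2 := by linarith
            linarith [hq, hcosh1]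
          have hmm : (1 / (2 * κ + 2)) * ((2 * κ + 2) * (κ + 1))
              ≤ Real.exp (-(β * s)) * Real.cosh (2 * β * t) := by
            apply mul_le_mul hinv hcd (by nlinarith) (Real.exp_pos _).le
          have hid : (1 / (2 * κ + 2)) * ((2 * κ + 2) * (κ + 1)) = κ + 1 := by
            field_simp
          linarith [hmm, hid.symm.le]
        · have habs : 2 * β * s ≤ |2 * β * t| := by
            rw [abs_mul, abs_of_nonneg (by positivity : (0:ℝ) ≤ 2 * β)]
            nlinarith [abs_nonneg t]
          have hch : Real.exp (2 * β * s) / 2 ≤ Real.cosh (2 * β * t) := by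
            calc Real.exp (2 * β * s) / 2 ≤ Real.exp |2 * β * t| / 2 := by
                  have := Real.exp_le_exp.2 habs; linarith
              _ ≤ _ := barrier_cosh_ge_exp_abs_half _
          have h12 : Real.exp (-(β * s)) * (Real.exp (2 * β * s) / 2)
              ≤ Real.exp (-(β * s)) * Real.cosh (2 * β * t) :=
            mul_le_mul_of_nonneg_left hch (Real.exp_pos _).le
          have h13 : Real.exp (-(β * s)) * (Real.exp (2 * β * s) / 2)
              = Real.exp (β * s) / 2 := by
            rw [div_eq_mul_inv, ← mul_assoc, ← Real.exp_add]
            ring_nf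
          rw [h13] at h12
          linarith [h12, he]
      have hminnn : (0:ℝ) ≤ min 1 (β * s) := le_min (by norm_num) (by positivity)
      calc κ * min 1 (β * s) ≤ κ * 1 := by
            apply mul_le_mul_of_nonneg_left hmin (by linarith)
        _ = κ := mul_one κ
        _ ≤ _ := hmain
  have hminnn : 0 ≤ min 1 (β * s) := le_min (by norm_num) (by positivity)
  have hstep : lam * (κ * min 1 (β * s))
      ≤ lam * max (Real.exp (-(β * s)) * Real.cosh (2 * β * t) - 1) 0 := by
    apply mul_le_mul_of_nonneg_left _ hlam.le
    calc κ * min 1 (β * s) ≤ Real.exp (-(β * s)) * Real.cosh (2 * β * t) - 1 := hE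
      _ ≤ _ := le_max_left _ _
  have hlk : lam * κ = 2 * nr * Lam := by
    rw [hκ, mul_div_assoc']
    field_simp
  calc 2 * nr * Lam * min 1 (β * s) = lam * κ * min 1 (β * s) := by rw [hlk]
    _ = lam * (κ * min 1 (β * s)) := by ring
    _ ≤ _ := hstep

/-- the sector around `w`. -/
def Asec {n : ℕ} (w : Eucl n) : Set (Eucl n) :=
  {y | ‖w‖ * ‖y‖ ≤ Real.sqrt n * |⟪w, y⟫|}

lemma Asec_measurable {n : ℕ} (w : Eucl n) : MeasurableSet (Asec w) := by
  apply measurableSet_le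
  · exact (continuous_const.mul continuous_norm).measurable
  · exact (continuous_const.mul (continuous_const.inner continuous_id').abs).measurable

lemma Asec_smul {n : ℕ} (w : Eucl n) {c : ℝ} (hc : 0 < c) : Asec (c • w) = Asec w := by
  ext y
  simp only [Asec, mem_setOf_eq, norm_smul, real_inner_smul_left, abs_mul,
    Real.norm_eq_abs, abs_of_pos hc]
  rw [mul_assoc, mul_comm (Real.sqrt n) (c * _), mul_assoc, mul_comm (|⟪w,y⟫|)]
  exact mul_le_mul_iff_of_pos_left hc

lemma barrier_exists_isom {n : ℕ} (u v : Eucl n) (h : ‖u‖ = ‖v‖) :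
    ∃ T : Eucl n ≃ₗᵢ[ℝ] Eucl n, T u = v := by
  by_cases huv : u = v
  · exact ⟨LinearIsometryEquiv.refl ℝ _, by rw [huv]; simp⟩
  · exact ⟨Submodule.reflection (ℝ ∙ (u - v))ᗮ, Submodule.reflection_sub h⟩

lemma barrier_exists_mem_Asec {n : ℕ} (hn : 1 ≤ n) (y : Eucl n) :
    ∃ i : Fin n, y ∈ Asec (EuclideanSpace.single i (1:ℝ)) := by
  have hne : (Finset.univ : Finset (Fin n)).Nonempty := by
    rw [Finset.univ_nonempty_iff]
    exact Fin.pos_iff_nonempty.mp hn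
  obtain ⟨i, -, hi⟩ := Finset.exists_max_image Finset.univ (fun i => |y i|) hne
  refine ⟨i, ?_⟩
  have h1 : ‖y‖ ^ 2 ≤ n * |y i| ^ 2 := by
    have : ‖y‖ ^ 2 = ∑ j, (y j) ^ 2 := by
      rw [EuclideanSpace.norm_eq, Real.sq_sqrt (by positivity)]
      simp [Real.norm_eq_abs, sq_abs]
    rw [this]
    calc ∑ j, (y j) ^ 2 ≤ ∑ _j : Fin n, |y i| ^ 2 := by
          apply Finset.sum_le_sum
          intro j _
          have := hi j (Finset.mem_univ j)
          nlinarith [abs_nonneg (y j), abs_nonneg (y i), sq_abs (y j)]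
      _ = n * |y i| ^ 2 := by simp [mul_comm]
  have h2 : ‖y‖ ≤ Real.sqrt n * |y i| := by
    calc ‖y‖ ≤ Real.sqrt (n * |y i| ^ 2) := by
          rw [← Real.sqrt_sq (norm_nonneg y)]; exact Real.sqrt_le_sqrt h1
      _ = Real.sqrt n * |y i| := by
          rw [Real.sqrt_mul (by positivity), Real.sqrt_sq (abs_nonneg _)]
  simp only [Asec, mem_setOf_eq, EuclideanSpace.norm_single, norm_one, one_mul]
  have : ⟪EuclideanSpace.single i (1:ℝ), y⟫ = y i := by
    rw [EuclideanSpace.inner_single_left]; simp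
  rw [this]
  exact h2

lemma barrier_sector_lintegral {n : ℕ} (hn : 1 ≤ n) (x : Eucl n) (hx : x ≠ 0) (F : ℝ → ℝ≥0∞)
    (hF : Measurable F) :
    ∫⁻ y : Eucl n, F ‖y‖ ≤ n * ∫⁻ y in Asec x, F ‖y‖ := by
  have key : ∀ i : Fin n, ∫⁻ y in Asec (EuclideanSpace.single i (1:ℝ)), F ‖y‖
      = ∫⁻ y in Asec x, F ‖y‖ := by
    intro i
    set v : Eucl n := ‖x‖ • EuclideanSpace.single i (1:ℝ) with hv
    have hnorm : ‖x‖ = ‖v‖ := by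
      rw [hv, norm_smul, EuclideanSpace.norm_single, norm_one, mul_one, Real.norm_eq_abs,
        abs_of_nonneg (norm_nonneg x)]
    obtain ⟨T, hT⟩ := barrier_exists_isom x v hnorm
    have hAv : Asec v = Asec (EuclideanSpace.single i (1:ℝ)) :=
      Asec_smul _ (norm_pos_iff.mpr hx)
    have hmp := T.measurePreserving
    have hmeas : Measurable fun z : Eucl n => (Asec v).indicator (fun w => F ‖w‖) z :=
      ((hF.comp measurable_norm)).indicator (Asec_measurable v)
    have h1 : ∫⁻ y in Asec v, F ‖y‖ = ∫⁻ z, (Asec v).indicator (fun w => F ‖w‖) z := by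
      rw [lintegral_indicator (Asec_measurable v)]
    have h2 : ∫⁻ z, (Asec v).indicator (fun w => F ‖w‖) z
        = ∫⁻ y, (Asec v).indicator (fun w => F ‖w‖) (T y) := (hmp.lintegral_comp hmeas).symm
    have h3 : ∀ y, (Asec v).indicator (fun w => F ‖w‖) (T y)
        = (Asec x).indicator (fun w => F ‖w‖) y := by
      intro y
      have hmem : T y ∈ Asec v ↔ y ∈ Asec x := by
        simp only [Asec, mem_setOf_eq]
        rw [← hT, T.inner_map_map, T.norm_map, T.norm_map]
      by_cases hy : y ∈ Asec x
      · rw [indicator_of_mem (hmem.mpr hy), indicator_of_mem hy, T.norm_map]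
      · rw [indicator_of_notMem (fun h => hy (hmem.mp h)), indicator_of_notMem hy]
    rw [← hAv, h1, h2]
    simp_rw [h3]
    rw [← lintegral_indicator (Asec_measurable x)]
  have cover : ∫⁻ y : Eucl n, F ‖y‖
      ≤ ∑ i : Fin n, ∫⁻ y in Asec (EuclideanSpace.single i (1:ℝ)), F ‖y‖ := by
    have hmeas : ∀ i : Fin n, Measurable fun y : Eucl n =>
        (Asec (EuclideanSpace.single i (1:ℝ))).indicator (fun w => F ‖w‖) y := fun i =>
      (hF.comp measurable_norm).indicator (Asec_measurable _)
    calc ∫⁻ y : Eucl n, F ‖y‖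
        ≤ ∫⁻ y : Eucl n, ∑ i : Fin n,
            (Asec (EuclideanSpace.single i (1:ℝ))).indicator (fun w => F ‖w‖) y := by
          apply lintegral_mono
          intro y
          obtain ⟨i, hi⟩ := barrier_exists_mem_Asec hn y
          calc F ‖y‖ = (Asec (EuclideanSpace.single i (1:ℝ))).indicator (fun w => F ‖w‖) y := by
                rw [indicator_of_mem hi]
            _ ≤ _ := Finset.single_le_sum
                (f := fun j => (Asec (EuclideanSpace.single j (1:ℝ))).indicator (fun w => F ‖w‖) y)
                (fun _ _ => zero_le) (Finset.mem_univ i)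
      _ = ∑ i : Fin n, ∫⁻ y, (Asec (EuclideanSpace.single i (1:ℝ))).indicator
            (fun w => F ‖w‖) y := by
          rw [lintegral_finset_sum _ (fun i _ => hmeas i)]
      _ = ∑ i : Fin n, ∫⁻ y in Asec (EuclideanSpace.single i (1:ℝ)), F ‖y‖ := by
          refine Finset.sum_congr rfl (fun i _ => ?_)
          rw [lintegral_indicator (Asec_measurable _)]
  calc ∫⁻ y : Eucl n, F ‖y‖ ≤ _ := cover
    _ = ∑ _i : Fin n, ∫⁻ y in Asec x, F ‖y‖ := Finset.sum_congr rfl (fun i _ => key i)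
    _ = n * ∫⁻ y in Asec x, F ‖y‖ := by simp [Finset.sum_const]

lemma barrier_min_beta_le {β s : ℝ} (hβ : 1 ≤ β) (hs : 0 ≤ s) : min 1 (β*s) ≤ β * min 1 s := by
  rcases le_total s 1 with h | h
  · rw [min_eq_right h]; exact min_le_right _ _
  · rw [min_eq_left h, mul_one]; exact le_trans (min_le_left _ _) hβ

end BarrierAux

set_option maxHeartbeats 2000000 in
/-- **Corollary 4.2** (barrier function `Φ`). -/
theorem barrier_corollary (n : ℕ) (hn : 1 ≤ n) (lam Lam cU α : ℝ)
    (hlam : 0 < lam) (hlamLam : lam ≤ Lam) (hcU : 0 < cU) (hα : 0 < α) :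
    ∃ Φ ψ : Eucl n → ℝ,
      IsBdd n Φ ∧ (∀ x, 0 ≤ Φ x) ∧ IsBdd n ψ ∧ (∀ x, 0 ≤ ψ x) ∧
      (∀ x : Eucl n, x ∉ Metric.closedBall (0 : Eucl n) (1 / 4) → ψ x = 0) ∧
      ∀ ν : Eucl n → ℝ → ℝ, KernelOK n ν → CondA n ν cU α →
        (∀ x : Eucl n, x ∉ Metric.ball (0 : Eucl n) (2 * Real.sqrt n) → Φ x = 0) ∧
        (∀ x ∈ cube n 0 3, 2 ≤ Φ x) ∧
        (∀ x : Eucl n,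
          Integrable (fun y : Eucl n => Lam * max (-delta2 n Φ x y) 0 * ν x ‖y‖) ∧
          ENNReal.ofReal ((∫ y : Eucl n, Lam * max (-delta2 n Φ x y) 0 * ν x ‖y‖) - ψ x) ≤
            ∫⁻ y : Eucl n, ENNReal.ofReal (lam * max (delta2 n Φ x y) 0 * ν x ‖y‖)) := by
  have hnr : (1:ℝ) ≤ (n:ℝ) := by exact_mod_cast hn
  set nr : ℝ := (n:ℝ) with hnrdef
  have hnr0 : (0:ℝ) < nr := by linarith
  have hLam0 : 0 < Lam := lt_of_lt_of_le hlam hlamLam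
  -- constants
  set Y : ℝ := (max 1 (32*nr*cU)) ^ (α⁻¹) with hYdef
  have hY0 : 0 ≤ Y := Real.rpow_nonneg (le_trans zero_le_one (le_max_left _ _)) _
  set β : ℝ := max (max 1 (Y*Y))
      (16 * nr * (2 * (2 * nr * Lam / lam) + 2) * (2 * nr * Lam / lam + 1)) with hβdef
  have hβ1 : (1:ℝ) ≤ β := le_trans (le_max_left _ _) (le_max_left _ _)
  have hβ0 : (0:ℝ) < β := by linarith
  have hβκ : 16 * nr * (2 * (2 * nr * Lam / lam) + 2) * (2 * nr * Lam / lam + 1) ≤ β :=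
    le_max_right _ _
  have hsβ1 : (1:ℝ) ≤ Real.sqrt β := by
    rw [show (1:ℝ) = Real.sqrt 1 by simp]
    exact Real.sqrt_le_sqrt hβ1
  have hsβ0 : 0 < Real.sqrt β := by linarith
  have hsβY : Y ≤ Real.sqrt β := by
    have hYβ : Y * Y ≤ β := le_trans (le_max_right _ _) (le_max_left _ _)
    calc Y = Real.sqrt (Y * Y) := (Real.sqrt_mul_self hY0).symm
      _ ≤ _ := Real.sqrt_le_sqrt hYβ
  have hP : 32*nr*cU ≤ (Real.sqrt β) ^ α := by
    have h1 : Y ^ α ≤ (Real.sqrt β) ^ α := Real.rpow_le_rpow hY0 hsβY hα.le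
    have h2 : Y ^ α = max 1 (32*nr*cU) := by
      rw [hYdef, ← Real.rpow_mul (le_trans zero_le_one (le_max_left _ _)),
        inv_mul_cancel₀ hα.ne', Real.rpow_one]
    have h3 := le_max_right (1:ℝ) (32*nr*cU)
    linarith [h2 ▸ h1]
  clear_value Y β
  clear hYdef hβdef
  -- truncation constants
  set e9 : ℝ := Real.exp (-(β*(9*nr/4))) with he9def
  set cc : ℝ := Real.exp (-(β*(4*nr))) with hccdef
  have hccpos : 0 < cc := Real.exp_pos _
  have hden : 0 < e9 - cc := by
    rw [he9def, hccdef, sub_pos, Real.exp_lt_exp]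
    linarith only [mul_pos hβ0 hnr0]
  have hccle : ∀ z : Eucl n, ‖z‖^2 ≤ 4*nr → cc ≤ Real.exp (-(β*‖z‖^2)) := by
    intro z hz
    rw [hccdef]; apply Real.exp_le_exp.2
    linarith only [mul_le_mul_of_nonneg_left hz hβ0.le]
  have hccge : ∀ z : Eucl n, 4*nr ≤ ‖z‖^2 → Real.exp (-(β*‖z‖^2)) ≤ cc := by
    intro z hz
    rw [hccdef]; apply Real.exp_le_exp.2
    linarith only [mul_le_mul_of_nonneg_left hz hβ0.le]
  have he9le : ∀ z : Eucl n, ‖z‖^2 ≤ 9*nr/4 → e9 ≤ Real.exp (-(β*‖z‖^2)) := by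
    intro z hz
    rw [he9def]; apply Real.exp_le_exp.2
    linarith only [mul_le_mul_of_nonneg_left hz hβ0.le]
  clear_value e9 cc
  clear he9def hccdef
  set a : ℝ := 2/(e9 - cc) with hadef
  have ha : 0 < a := by
    rw [hadef]; exact div_pos two_pos hden
  have hacalc : a * (e9 - cc) = 2 := by
    rw [hadef]; field_simp
  clear_value a
  clear hadef
  set Φ : Eucl n → ℝ := fun z => a * max (Real.exp (-(β*‖z‖^2)) - cc) 0 with hΦdef
  set Cψ : ℝ := 2*a*β*Lam with hCψdef
  have hCψ0 : 0 ≤ Cψ := by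
    rw [hCψdef]
    exact (mul_pos (mul_pos (mul_pos two_pos ha) hβ0) hLam0).le
  set ψ : Eucl n → ℝ := fun x => if ‖x‖ ≤ 1/4 then Cψ else 0 with hψdef
  -- basic Φ properties
  have hΦnn : ∀ z, 0 ≤ Φ z := fun z => mul_nonneg ha.le (le_max_right _ _)
  have hGle1 : ∀ z : Eucl n, Real.exp (-(β*‖z‖^2)) ≤ 1 := by
    intro z
    rw [show (1:ℝ) = Real.exp 0 by simp]
    apply Real.exp_le_exp.2
    have : 0 ≤ β*‖z‖^2 := mul_nonneg hβ0.le (sq_nonneg _)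
    linarith
  have hΦle : ∀ z, Φ z ≤ a := by
    intro z
    have h1 : max (Real.exp (-(β*‖z‖^2)) - cc) 0 ≤ 1 := by
      apply max_le _ zero_le_one
      have := hGle1 z
      linarith
    calc Φ z = a * max (Real.exp (-(β*‖z‖^2)) - cc) 0 := rfl
      _ ≤ a * 1 := mul_le_mul_of_nonneg_left h1 ha.le
      _ = a := mul_one a
  have hΦout : ∀ z : Eucl n, 4*nr ≤ ‖z‖^2 → Φ z = 0 := by
    intro z hz
    have hle := hccge z hz
    calc Φ z = a * max (Real.exp (-(β*‖z‖^2)) - cc) 0 := rfl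
      _ = a * 0 := by rw [max_eq_right (by linarith)]
      _ = 0 := mul_zero a
  have hΦcont : Continuous Φ := by
    apply continuous_const.mul
    apply Continuous.max _ continuous_const
    apply Continuous.sub _ continuous_const
    exact Real.continuous_exp.comp ((continuous_const.mul (continuous_norm.pow 2)).neg)
  refine ⟨Φ, ψ, ⟨a, fun x => ?_⟩, hΦnn, ⟨Cψ, fun x => ?_⟩, fun x => ?_, fun x hx => ?_, ?_⟩
  · rw [abs_of_nonneg (hΦnn x)]; exact hΦle x
  · by_cases h : ‖x‖ ≤ 1/4
    · calc |ψ x| = |Cψ| := by simp only [hψdef]; rw [if_pos h]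
        _ ≤ Cψ := by rw [abs_of_nonneg hCψ0]
    · calc |ψ x| = |(0:ℝ)| := by simp only [hψdef]; rw [if_neg h]
        _ ≤ Cψ := by simpa using hCψ0
  · by_cases h : ‖x‖ ≤ 1/4
    · simp only [hψdef]; rw [if_pos h]; exact hCψ0
    · simp only [hψdef]; rw [if_neg h]
  · have h : ¬ (‖x‖ ≤ 1/4) := by
      intro hle
      exact hx (by simpa [Metric.mem_closedBall, dist_zero_right] using hle)
    simp only [hψdef]; rw [if_neg h]
  -- main part
  intro ν hOK hA
  obtain ⟨hmeasν, hν00, hInt⟩ := hOK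
  obtain ⟨hA1, hA2, hA3⟩ := hA
  have hsupp : ∀ x : Eucl n, x ∉ Metric.ball (0 : Eucl n) (2 * Real.sqrt nr) → Φ x = 0 := by
    intro x hx
    apply hΦout
    have h1 : 2 * Real.sqrt nr ≤ ‖x‖ := by
      by_contra hcon
      exact hx (by simpa [Metric.mem_ball, dist_zero_right] using lt_of_not_ge hcon)
    have h2 : (2 * Real.sqrt nr)^2 ≤ ‖x‖^2 :=
      pow_le_pow_left₀ (by positivity) h1 2
    have h3 : (2 * Real.sqrt nr)^2 = 4*nr := by
      rw [mul_pow, Real.sq_sqrt hnr0.le]; norm_num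
    linarith [h3 ▸ h2]
  refine ⟨hsupp, fun x hx => ?_, fun x => ?_⟩
  · -- lower bound on the cube
    have hx' : ∀ i, |x i| < 3/2 := by
      intro i
      have := hx i
      simpa using this
    have hxnorm : ‖x‖^2 ≤ 9*nr/4 := by
      have h1 : ‖x‖^2 = ∑ i, (x i)^2 := by
        rw [EuclideanSpace.norm_eq, Real.sq_sqrt (by positivity)]
        simp [Real.norm_eq_abs, sq_abs]
      rw [h1]
      calc ∑ i, (x i)^2 ≤ ∑ _i : Fin n, (9/4 : ℝ) := by
            apply Finset.sum_le_sum
            intro i _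
            have h2 := hx' i
            have h3 := abs_nonneg (x i)
            nlinarith only [h2, h3, sq_abs (x i)]
        _ = nr * (9/4) := by
            rw [Finset.sum_const, Finset.card_univ, Fintype.card_fin, nsmul_eq_mul]
        _ = 9*nr/4 := by ring
    have hG9 : e9 ≤ Real.exp (-(β*‖x‖^2)) := he9le x hxnorm
    have hccG : cc ≤ Real.exp (-(β*‖x‖^2)) := by linarith [hden]
    calc (2:ℝ) = a * (e9 - cc) := hacalc.symm
      _ ≤ a * (Real.exp (-(β*‖x‖^2)) - cc) := by
          apply mul_le_mul_of_nonneg_left _ ha.le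
          linarith
      _ ≤ a * max (Real.exp (-(β*‖x‖^2)) - cc) 0 :=
          mul_le_mul_of_nonneg_left (le_max_left _ _) ha.le
      _ = Φ x := rfl
  · -- the integrability and the key inequality at a given x
    have hνmeas : Measurable fun y : Eucl n => ν x ‖y‖ :=
      hmeasν.comp (measurable_const.prodMk measurable_norm)
    haveI : Nontrivial (Eucl n) := by
      refine ⟨⟨EuclideanSpace.single ⟨0, hn⟩ (1:ℝ), 0, ?_⟩⟩
      intro h
      have h2 : ‖EuclideanSpace.single (⟨0, hn⟩ : Fin n) (1:ℝ)‖ = 1 := by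
        rw [EuclideanSpace.norm_single, norm_one]
      rw [h, norm_zero] at h2
      norm_num at h2
    have hae : ∀ᵐ y : Eucl n, y ≠ (0 : Eucl n) := by
      have h0 : (volume : Measure (Eucl n)) {(0:Eucl n)} = 0 := measure_singleton _
      apply ae_iff.2
      simpa [not_not] using h0
    have hν0' : ∀ᵐ y : Eucl n, 0 ≤ ν x ‖y‖ :=
      hae.mono fun y hy => hν00 x ‖y‖ (norm_pos_iff.mpr hy)
    have hD := hInt x
    have hD1 : ∫ y : Eucl n, min 1 (‖y‖^2) * ν x ‖y‖ = 1 := by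
      have := hA1 x
      unfold hfun at this
      simpa using this
    have hDnn : ∀ᵐ y : Eucl n, 0 ≤ min 1 (‖y‖^2) * ν x ‖y‖ :=
      hν0'.mono fun y hy => mul_nonneg (le_min zero_le_one (sq_nonneg _)) hy
    have hδcont : Continuous fun y : Eucl n => delta2 n Φ x y := by
      unfold delta2
      exact ((hΦcont.comp (continuous_const.add continuous_id)).add
        (hΦcont.comp (continuous_const.sub continuous_id))).sub continuous_const
    -- global lower bound for delta2
    have hδlb : ∀ y : Eucl n, -(2*a*min 1 (β*‖y‖^2)) ≤ delta2 n Φ x y := by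
      intro y
      have hminnn : (0:ℝ) ≤ min 1 (β*‖y‖^2) :=
        le_min zero_le_one (mul_nonneg hβ0.le (sq_nonneg _))
      by_cases hc : ‖x‖^2 ≤ 4*nr
      · have hGc : cc ≤ Real.exp (-(β*‖x‖^2)) := hccle x hc
        have h1 := barrier_delta_ge a β cc ha.le x y hGc
        rw [← hΦdef] at h1
        have h2 := barrier_Efun_ge_neg_min β hβ0.le x y
        have hGpos := Real.exp_pos (-(β*‖x‖^2))
        have hG1 := hGle1 x
        have h3 : 2*a*Real.exp (-(β*‖x‖^2)) * (-(min 1 (β*‖y‖^2)))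
            ≤ 2*a*Real.exp (-(β*‖x‖^2)) * Efun β x y := by
          apply mul_le_mul_of_nonneg_left _
            (mul_nonneg (mul_nonneg (by norm_num : (0:ℝ) ≤ 2) ha.le) hGpos.le)
          simpa using h2
        have h4 : -(2*a*min 1 (β*‖y‖^2))
            ≤ 2*a*Real.exp (-(β*‖x‖^2)) * (-(min 1 (β*‖y‖^2))) := by
          linarith only [mul_nonneg (mul_nonneg (mul_nonneg
            (by norm_num : (0:ℝ) ≤ 2) ha.le) hminnn) (sub_nonneg.2 hG1)]
        linarith
      · have hΦx : Φ x = 0 := hΦout x (by linarith)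
        have h5 : 0 ≤ delta2 n Φ x y := by
          unfold delta2
          rw [hΦx]
          have := hΦnn (x + y)
          have := hΦnn (x - y)
          linarith
        have h6 : (0:ℝ) ≤ 2*a*min 1 (β*‖y‖^2) :=
          mul_nonneg (mul_nonneg (by norm_num) ha.le) hminnn
        linarith only [h5, h6]
    -- integrability of the negative part
    have hnegle : ∀ y : Eucl n, max (-delta2 n Φ x y) 0 ≤ 2*a*β*min 1 (‖y‖^2) := by
      intro y
      have h2 : min 1 (β*‖y‖^2) ≤ β * min 1 (‖y‖^2) := barrier_min_beta_le hβ1 (sq_nonneg _)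
      apply max_le _
        (mul_nonneg (mul_nonneg (mul_nonneg (by norm_num : (0:ℝ) ≤ 2) ha.le) hβ0.le)
          (le_min zero_le_one (sq_nonneg _)))
      have h1 := hδlb y
      linarith only [h1, mul_le_mul_of_nonneg_left h2
        (mul_nonneg (by norm_num : (0:ℝ) ≤ 2) ha.le)]
    have hδmeas : Measurable fun y : Eucl n => Lam * max (-delta2 n Φ x y) 0 :=
      (continuous_const.mul ((hδcont.neg).max continuous_const)).measurable
    have hfmeas : AEStronglyMeasurable
        (fun y : Eucl n => Lam * max (-delta2 n Φ x y) 0 * ν x ‖y‖) volume :=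
      (hδmeas.mul hνmeas).aestronglyMeasurable
    have hgint : Integrable (fun y : Eucl n => Cψ * (min 1 (‖y‖^2) * ν x ‖y‖)) :=
      hD.const_mul Cψ
    have hfae : ∀ᵐ y : Eucl n, ‖Lam * max (-delta2 n Φ x y) 0 * ν x ‖y‖‖
        ≤ Cψ * (min 1 (‖y‖^2) * ν x ‖y‖) := by
      apply hν0'.mono
      intro y hy
      have h1 : 0 ≤ Lam * max (-delta2 n Φ x y) 0 * ν x ‖y‖ :=
        mul_nonneg (mul_nonneg hLam0.le (le_max_right _ _)) hy
      rw [Real.norm_eq_abs, abs_of_nonneg h1]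
      calc Lam * max (-delta2 n Φ x y) 0 * ν x ‖y‖
          ≤ Lam * (2*a*β*min 1 (‖y‖^2)) * ν x ‖y‖ := by
            apply mul_le_mul_of_nonneg_right _ hy
            exact mul_le_mul_of_nonneg_left (hnegle y) hLam0.le
        _ = Cψ * (min 1 (‖y‖^2) * ν x ‖y‖) := by rw [hCψdef]; ring
    have hfint : Integrable (fun y : Eucl n => Lam * max (-delta2 n Φ x y) 0 * ν x ‖y‖) :=
      Integrable.mono' hgint hfmeas hfae
    refine ⟨hfint, ?_⟩
    have hfnn : ∀ᵐ y : Eucl n, 0 ≤ Lam * max (-delta2 n Φ x y) 0 * ν x ‖y‖ :=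
      hν0'.mono fun y hy => mul_nonneg (mul_nonneg hLam0.le (le_max_right _ _)) hy
    have hIf : ∫ y : Eucl n, Lam * max (-delta2 n Φ x y) 0 * ν x ‖y‖ ≤ Cψ := by
      have h1 : ∫ y : Eucl n, Lam * max (-delta2 n Φ x y) 0 * ν x ‖y‖
          ≤ ∫ y : Eucl n, Cψ * (min 1 (‖y‖^2) * ν x ‖y‖) := by
        apply integral_mono_ae hfint hgint
        apply hfae.mp
        apply hfnn.mono
        intro y h1 h2
        calc Lam * max (-delta2 n Φ x y) 0 * ν x ‖y‖
            = ‖Lam * max (-delta2 n Φ x y) 0 * ν x ‖y‖‖ := by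
              rw [Real.norm_eq_abs, abs_of_nonneg h1]
          _ ≤ _ := h2
      rw [integral_const_mul, hD1, mul_one] at h1
      exact h1
    by_cases hx4 : ‖x‖ ≤ 1/4
    · -- near the origin ψ pays
      have hψx : ψ x = Cψ := by simp only [hψdef]; rw [if_pos hx4]
      rw [hψx]
      have hz : ENNReal.ofReal ((∫ y : Eucl n, Lam * max (-delta2 n Φ x y) 0 * ν x ‖y‖) - Cψ)
          = 0 := by
        apply ENNReal.ofReal_eq_zero.2
        linarith
      rw [hz]
      exact zero_le
    have hψx : ψ x = 0 := by simp only [hψdef]; rw [if_neg hx4]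
    rw [hψx, sub_zero]
    have hx4' : 1/4 < ‖x‖ := lt_of_not_ge hx4
    by_cases hxout : 4*nr ≤ ‖x‖^2
    · -- far away, Φ x = 0 and negative part vanishes identically
      have hΦx : Φ x = 0 := hΦout x hxout
      have hzero : ∀ y : Eucl n, Lam * max (-delta2 n Φ x y) 0 * ν x ‖y‖ = 0 := by
        intro y
        have h5 : 0 ≤ delta2 n Φ x y := by
          unfold delta2
          rw [hΦx]
          have := hΦnn (x + y)
          have := hΦnn (x - y)
          linarith
        rw [max_eq_right (by linarith), mul_zero, zero_mul]
      have hintz : ∫ y : Eucl n, Lam * max (-delta2 n Φ x y) 0 * ν x ‖y‖ = 0 := by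
        rw [show (fun y : Eucl n => Lam * max (-delta2 n Φ x y) 0 * ν x ‖y‖)
            = fun _ => (0:ℝ) from funext hzero]
        exact integral_zero _ _
      rw [hintz]
      simpa using zero_le
    -- the main region
    push_neg at hxout
    have hGc : cc ≤ Real.exp (-(β*‖x‖^2)) := hccle x hxout.le
    have hGxpos : 0 < Real.exp (-(β*‖x‖^2)) := Real.exp_pos _
    have hx0 : x ≠ 0 := by
      intro h
      rw [h, norm_zero] at hx4'
      norm_num at hx4'
    -- set up the truncated minimum kernel
    have hmmeas : Measurable fun y : Eucl n => min 1 (β*‖y‖^2) * ν x ‖y‖ :=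
      ((continuous_const.min (continuous_const.mul (continuous_norm.pow 2))).measurable).mul
        hνmeas
    have hmnn : ∀ᵐ y : Eucl n, 0 ≤ min 1 (β*‖y‖^2) * ν x ‖y‖ :=
      hν0'.mono fun y hy =>
        mul_nonneg (le_min zero_le_one (mul_nonneg hβ0.le (sq_nonneg _))) hy
    have hmint : Integrable (fun y : Eucl n => min 1 (β*‖y‖^2) * ν x ‖y‖) := by
      apply Integrable.mono' (hD.const_mul β) (hmmeas.aestronglyMeasurable)
      apply hν0'.mono
      intro y hy
      have h1 : 0 ≤ min 1 (β*‖y‖^2) * ν x ‖y‖ :=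
        mul_nonneg (le_min zero_le_one (mul_nonneg hβ0.le (sq_nonneg _))) hy
      rw [Real.norm_eq_abs, abs_of_nonneg h1]
      calc min 1 (β*‖y‖^2) * ν x ‖y‖ ≤ (β * min 1 (‖y‖^2)) * ν x ‖y‖ :=
            mul_le_mul_of_nonneg_right (barrier_min_beta_le hβ1 (sq_nonneg _)) hy
        _ = β * (min 1 (‖y‖^2) * ν x ‖y‖) := by ring
    have hsnr0 : 0 < Real.sqrt nr := Real.sqrt_pos.2 hnr0
    set rstar : ℝ := (4*Real.sqrt nr)⁻¹ with hrsdef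
    have hrs0 : 0 < rstar := by
      rw [hrsdef]; exact inv_pos.2 (by linarith)
    have hrs2 : rstar^2 = (16*nr)⁻¹ := by
      rw [hrsdef, inv_pow, mul_pow, Real.sq_sqrt hnr0.le]
      norm_num
    have hrsnr : Real.sqrt nr * rstar = 1/4 := by
      rw [hrsdef, mul_inv,
        show Real.sqrt nr * (4⁻¹ * (Real.sqrt nr)⁻¹)
          = (Real.sqrt nr * (Real.sqrt nr)⁻¹) * 4⁻¹ by ring,
        mul_inv_cancel₀ hsnr0.ne']
      norm_num
    clear_value rstar
    clear hrsdef
    -- split the integral of m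
    have hsplit : (∫ y in Metric.ball (0:Eucl n) rstar, min 1 (β*‖y‖^2) * ν x ‖y‖)
        + (∫ y in (Metric.ball (0:Eucl n) rstar)ᶜ, min 1 (β*‖y‖^2) * ν x ‖y‖)
        = ∫ y : Eucl n, min 1 (β*‖y‖^2) * ν x ‖y‖ :=
      integral_add_compl measurableSet_ball hmint
    have htail : ∫ y in (Metric.ball (0:Eucl n) rstar)ᶜ, min 1 (β*‖y‖^2) * ν x ‖y‖
        ≤ 16*nr := by
      have hpt : ∀ y ∈ (Metric.ball (0:Eucl n) rstar)ᶜ,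
          min 1 (β*‖y‖^2) * ν x ‖y‖ ≤ 16*nr * (min 1 (‖y‖^2) * ν x ‖y‖) := by
        intro y hy
        have hyr : rstar ≤ ‖y‖ := by
          have := hy
          simp only [mem_compl_iff, Metric.mem_ball, dist_zero_right, not_lt] at this
          exact this
        have hν0y : 0 ≤ ν x ‖y‖ := hν00 x ‖y‖ (lt_of_lt_of_le hrs0 hyr)
        have h1 : min 1 (β*‖y‖^2) ≤ 1 := min_le_left _ _
        have h2 : (16*nr)⁻¹ ≤ min 1 (‖y‖^2) := by
          apply le_min
          · have hpos : (0:ℝ) < 16*nr := by linarith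
            have := (div_le_one hpos).mpr (by linarith : (1:ℝ) ≤ 16*nr)
            rw [one_div] at this
            exact this
          · rw [← hrs2]
            exact pow_le_pow_left₀ hrs0.le hyr 2
        have h3 : (1:ℝ) ≤ 16*nr * min 1 (‖y‖^2) := by
          have h16 : (0:ℝ) < 16*nr := by linarith
          calc (1:ℝ) = 16*nr * (16*nr)⁻¹ := by field_simp
            _ ≤ 16*nr * min 1 (‖y‖^2) := mul_le_mul_of_nonneg_left h2 h16.le
        calc min 1 (β*‖y‖^2) * ν x ‖y‖ ≤ 1 * ν x ‖y‖ := mul_le_mul_of_nonneg_right h1 hν0y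
          _ ≤ (16*nr * min 1 (‖y‖^2)) * ν x ‖y‖ := mul_le_mul_of_nonneg_right h3 hν0y
          _ = 16*nr * (min 1 (‖y‖^2) * ν x ‖y‖) := by ring
      calc ∫ y in (Metric.ball (0:Eucl n) rstar)ᶜ, min 1 (β*‖y‖^2) * ν x ‖y‖
          ≤ ∫ y in (Metric.ball (0:Eucl n) rstar)ᶜ, 16*nr * (min 1 (‖y‖^2) * ν x ‖y‖) :=
            setIntegral_mono_on hmint.integrableOn
              ((hD.const_mul (16*nr)).integrableOn) measurableSet_ball.compl hpt
        _ ≤ ∫ y : Eucl n, 16*nr * (min 1 (‖y‖^2) * ν x ‖y‖) := by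
            apply setIntegral_le_integral (hD.const_mul (16*nr))
            apply hDnn.mono
            intro y hy
            have : (0:ℝ) ≤ 16*nr := by linarith
            exact mul_nonneg this hy
        _ = 16*nr := by rw [integral_const_mul, hD1, mul_one]
    -- lower bound for the total integral via (A3)
    have hItot : 32*nr ≤ ∫ y : Eucl n, min 1 (β*‖y‖^2) * ν x ‖y‖ := by
      have hρpos : 0 < (Real.sqrt β)⁻¹ := inv_pos.2 hsβ0
      have hA3' := hA3 x (Real.sqrt β)⁻¹ (Real.sqrt β) hρpos hsβ1
      rw [mul_inv_cancel₀ hsβ0.ne', hA1 x] at hA3'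
      have hfρ : hfun n ν x ((Real.sqrt β)⁻¹) = ∫ y : Eucl n, min 1 (β*‖y‖^2) * ν x ‖y‖ := by
        unfold hfun
        congr 1
        funext y
        have hρ2 : ((Real.sqrt β)⁻¹)^2 = β⁻¹ := by
          rw [inv_pow, Real.sq_sqrt hβ0.le]
        rw [hρ2, div_inv_eq_mul, mul_comm (‖y‖^2) β]
      rw [hfρ] at hA3'
      rw [Real.rpow_neg hsβ0.le] at hA3'
      have hPpos : 0 < (Real.sqrt β)^α := Real.rpow_pos_of_pos hsβ0 α
      have h5 : (Real.sqrt β)^α ≤ cU * ∫ y : Eucl n, min 1 (β*‖y‖^2) * ν x ‖y‖ := by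
        have h6 : (Real.sqrt β)^α * 1 ≤ (Real.sqrt β)^α
            * (cU * ((Real.sqrt β)^α)⁻¹ * ∫ y : Eucl n, min 1 (β*‖y‖^2) * ν x ‖y‖) :=
          mul_le_mul_of_nonneg_left hA3' hPpos.le
        have h7 : (Real.sqrt β)^α
            * (cU * ((Real.sqrt β)^α)⁻¹ * ∫ y : Eucl n, min 1 (β*‖y‖^2) * ν x ‖y‖)
            = cU * ∫ y : Eucl n, min 1 (β*‖y‖^2) * ν x ‖y‖ := by
          field_simp
        rw [h7] at h6
        linarith [h6]
      nlinarith only [h5, hP, hcU]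
    have hJ : 16*nr ≤ ∫ y in Metric.ball (0:Eucl n) rstar, min 1 (β*‖y‖^2) * ν x ‖y‖ := by
      linarith [hsplit, htail, hItot]
    set J : ℝ := ∫ y in Metric.ball (0:Eucl n) rstar, min 1 (β*‖y‖^2) * ν x ‖y‖ with hJdef
    have hJ0 : 0 ≤ J := by linarith
    set Gx : ℝ := Real.exp (-(β*‖x‖^2)) with hGxdef
    have hGx0 : 0 < Gx := hGxdef ▸ Real.exp_pos _
    have h2aG : (0:ℝ) ≤ 2*a*Gx :=
      mul_nonneg (mul_nonneg (by norm_num) ha.le) hGx0.le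
    have h4aGL : (0:ℝ) ≤ 4*a*Gx*Lam :=
      mul_nonneg (mul_nonneg (mul_nonneg (by norm_num) ha.le) hGx0.le) hLam0.le
    -- upper bound for the integral of the negative part
    have hδlbG : ∀ y : Eucl n, max (-delta2 n Φ x y) 0 ≤ 2*a*Gx*min 1 (β*‖y‖^2) := by
      intro y
      have h1 := barrier_delta_ge a β cc ha.le x y hGc
      rw [← hΦdef] at h1
      have h2 := barrier_Efun_ge_neg_min β hβ0.le x y
      have hminnn : (0:ℝ) ≤ min 1 (β*‖y‖^2) :=
        le_min zero_le_one (mul_nonneg hβ0.le (sq_nonneg _))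
      apply max_le _ (mul_nonneg h2aG hminnn)
      have h3 : 2*a*Gx * (-(min 1 (β*‖y‖^2))) ≤ 2*a*Gx * Efun β x y := by
        apply mul_le_mul_of_nonneg_left _ h2aG
        simpa using h2
      rw [hGxdef] at h3 ⊢
      linarith only [h1, h3]
    have hIfmain : ∫ y : Eucl n, Lam * max (-delta2 n Φ x y) 0 * ν x ‖y‖
        ≤ 4*a*Gx*Lam*J := by
      have h2aGL : (0:ℝ) ≤ 2*a*Gx*Lam := mul_nonneg h2aG hLam0.le
      have h1 : ∫ y : Eucl n, Lam * max (-delta2 n Φ x y) 0 * ν x ‖y‖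
          ≤ ∫ y : Eucl n, 2*a*Gx*Lam * (min 1 (β*‖y‖^2) * ν x ‖y‖) := by
        apply integral_mono_ae hfint (hmint.const_mul _)
        apply hν0'.mono
        intro y hy
        calc Lam * max (-delta2 n Φ x y) 0 * ν x ‖y‖
            ≤ Lam * (2*a*Gx*min 1 (β*‖y‖^2)) * ν x ‖y‖ := by
              apply mul_le_mul_of_nonneg_right _ hy
              exact mul_le_mul_of_nonneg_left (hδlbG y) hLam0.le
          _ = 2*a*Gx*Lam * (min 1 (β*‖y‖^2) * ν x ‖y‖) := by ring
      rw [integral_const_mul] at h1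
      calc ∫ y : Eucl n, Lam * max (-delta2 n Φ x y) 0 * ν x ‖y‖
          ≤ 2*a*Gx*Lam * ∫ y : Eucl n, min 1 (β*‖y‖^2) * ν x ‖y‖ := h1
        _ ≤ 2*a*Gx*Lam * (J + 16*nr) := by
            apply mul_le_mul_of_nonneg_left _ h2aGL
            linarith [hsplit, htail]
        _ ≤ 2*a*Gx*Lam * (J + J) := by
            apply mul_le_mul_of_nonneg_left _ h2aGL
            linarith
        _ = 4*a*Gx*Lam*J := by ring
    -- the radial profile used for the sector estimate
    set F : ℝ → ℝ≥0∞ := fun r =>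
      if r < rstar then ENNReal.ofReal (min 1 (β*r^2) * ν x r) else 0 with hFdef
    have hFmeas : Measurable F := by
      rw [hFdef]
      apply Measurable.ite (measurableSet_lt measurable_id measurable_const)
      · apply ENNReal.measurable_ofReal.comp
        apply Measurable.mul
        · exact (continuous_const.min (continuous_const.mul (continuous_pow 2))).measurable
        · exact hmeasν.comp (measurable_const.prodMk measurable_id)
      · exact measurable_const
    have hofJ : ENNReal.ofReal J = ∫⁻ y : Eucl n, F ‖y‖ := by
      rw [hJdef]
      rw [ofReal_integral_eq_lintegral_ofReal hmint.integrableOn (ae_restrict_of_ae hmnn)]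
      rw [← lintegral_indicator measurableSet_ball]
      congr 1
      funext y
      by_cases hyr : ‖y‖ < rstar
      · rw [indicator_of_mem (by simpa [Metric.mem_ball, dist_zero_right] using hyr), hFdef]
        simp only [if_pos hyr]
      · rw [indicator_of_notMem (by simpa [Metric.mem_ball, dist_zero_right] using hyr), hFdef]
        simp only [if_neg hyr]
    have hsec := barrier_sector_lintegral hn x hx0 F hFmeas
    -- pointwise estimate on the sector
    have hkey : ∀ᵐ y ∂(volume.restrict (Asec x)),
        (ENNReal.ofReal (4*a*Gx*Lam) * (n:ℝ≥0∞)) * F ‖y‖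
          ≤ ENNReal.ofReal (lam * max (delta2 n Φ x y) 0 * ν x ‖y‖) := by
      rw [ae_restrict_iff' (Asec_measurable x)]
      apply hae.mono
      intro y hy0 hyA
      by_cases hyr : ‖y‖ < rstar
      · have hFy : F ‖y‖ = ENNReal.ofReal (min 1 (β*‖y‖^2) * ν x ‖y‖) := by
          rw [hFdef]; simp only [if_pos hyr]
        rw [hFy]
        have hν0y : 0 ≤ ν x ‖y‖ := hν00 x ‖y‖ (norm_pos_iff.mpr hy0)
        have hsA : ‖x‖ * ‖y‖ ≤ Real.sqrt nr * |⟪x, y⟫| := hyA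
        have ht1 : ‖y‖^2 / 16 ≤ nr * ⟪x, y⟫^2 := by
          have hsq : (‖x‖ * ‖y‖)^2 ≤ (Real.sqrt nr * |⟪x, y⟫|)^2 :=
            pow_le_pow_left₀ (by positivity) hsA 2
          rw [mul_pow, mul_pow, Real.sq_sqrt hnr0.le, sq_abs] at hsq
          have hx2 : (1:ℝ)/16 ≤ ‖x‖^2 := by
            nlinarith only [hx4', norm_nonneg x]
          have hx3 : (1/16) * ‖y‖^2 ≤ ‖x‖^2 * ‖y‖^2 :=
            mul_le_mul_of_nonneg_right hx2 (sq_nonneg _)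
          linarith only [hsq, hx3]
        have ht2 : ‖y‖^2 ≤ |⟪x, y⟫| := by
          have h1 : Real.sqrt nr * ‖y‖^2 ≤ Real.sqrt nr * |⟪x, y⟫| := by
            calc Real.sqrt nr * ‖y‖^2 = (Real.sqrt nr * ‖y‖) * ‖y‖ := by ring
              _ ≤ (1/4) * ‖y‖ := by
                  apply mul_le_mul_of_nonneg_right _ (norm_nonneg y)
                  calc Real.sqrt nr * ‖y‖ ≤ Real.sqrt nr * rstar :=
                        mul_le_mul_of_nonneg_left hyr.le hsnr0.le
                    _ = 1/4 := hrsnr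
              _ ≤ ‖x‖ * ‖y‖ := mul_le_mul_of_nonneg_right hx4'.le (norm_nonneg y)
              _ ≤ Real.sqrt nr * |⟪x, y⟫| := hsA
          exact le_of_mul_le_mul_left h1 hsnr0
        have hEp := barrier_Efun_pos hnr hlam hlamLam hβκ (sq_nonneg ‖y‖) ht1 ht2
        have hdel := barrier_delta_ge a β cc ha.le x y hGc
        rw [← hΦdef] at hdel
        have hdel' : 2*a*Gx * Efun β x y ≤ delta2 n Φ x y := by
          rw [hGxdef]; exact hdel
        have hmax1 : max (2*a*Gx*Efun β x y) 0 ≤ max (delta2 n Φ x y) 0 :=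
          max_le_max hdel' le_rfl
        have hmax2 : 2*a*Gx * max (Efun β x y) 0 = max (2*a*Gx*Efun β x y) 0 := by
          rw [mul_max_of_nonneg _ _ h2aG, mul_zero]
        have hreal : (4*a*Gx*Lam) * nr * (min 1 (β*‖y‖^2) * ν x ‖y‖)
            ≤ lam * max (delta2 n Φ x y) 0 * ν x ‖y‖ := by
          have h6 : 2*nr*Lam * min 1 (β*‖y‖^2) ≤ lam * max (Efun β x y) 0 := by
            have heq : Efun β x y
                = Real.exp (-(β * ‖y‖^2)) * Real.cosh (2*β*⟪x, y⟫) - 1 := rfl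
            rw [heq]
            exact hEp
          have h7 : (2*a*Gx) * (2*nr*Lam * min 1 (β*‖y‖^2))
              ≤ (2*a*Gx) * (lam * max (Efun β x y) 0) :=
            mul_le_mul_of_nonneg_left h6 h2aG
          have h8 : (2*a*Gx) * (lam * max (Efun β x y) 0)
              ≤ lam * max (delta2 n Φ x y) 0 := by
            calc (2*a*Gx) * (lam * max (Efun β x y) 0)
                = lam * (2*a*Gx * max (Efun β x y) 0) := by ring
              _ = lam * max (2*a*Gx*Efun β x y) 0 := by rw [hmax2]
              _ ≤ lam * max (delta2 n Φ x y) 0 :=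
                  mul_le_mul_of_nonneg_left hmax1 hlam.le
          have h9 : (4*a*Gx*Lam) * nr * min 1 (β*‖y‖^2)
              ≤ lam * max (delta2 n Φ x y) 0 := by
            calc (4*a*Gx*Lam) * nr * min 1 (β*‖y‖^2)
                = (2*a*Gx) * (2*nr*Lam * min 1 (β*‖y‖^2)) := by ring
              _ ≤ (2*a*Gx) * (lam * max (Efun β x y) 0) := h7
              _ ≤ lam * max (delta2 n Φ x y) 0 := h8
          calc (4*a*Gx*Lam) * nr * (min 1 (β*‖y‖^2) * ν x ‖y‖)
              = ((4*a*Gx*Lam) * nr * min 1 (β*‖y‖^2)) * ν x ‖y‖ := by ring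
            _ ≤ (lam * max (delta2 n Φ x y) 0) * ν x ‖y‖ :=
                mul_le_mul_of_nonneg_right h9 hν0y
            _ = lam * max (delta2 n Φ x y) 0 * ν x ‖y‖ := by ring
        calc (ENNReal.ofReal (4*a*Gx*Lam) * (n:ℝ≥0∞))
              * ENNReal.ofReal (min 1 (β*‖y‖^2) * ν x ‖y‖)
            = ENNReal.ofReal ((4*a*Gx*Lam) * nr * (min 1 (β*‖y‖^2) * ν x ‖y‖)) := by
              rw [ENNReal.ofReal_mul (p := (4*a*Gx*Lam) * nr) (mul_nonneg h4aGL hnr0.le),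
                ENNReal.ofReal_mul (p := 4*a*Gx*Lam) h4aGL, hnrdef, ENNReal.ofReal_natCast]
          _ ≤ ENNReal.ofReal (lam * max (delta2 n Φ x y) 0 * ν x ‖y‖) :=
              ENNReal.ofReal_le_ofReal hreal
      · have hFy : F ‖y‖ = 0 := by
          rw [hFdef]; simp only [if_neg hyr]
        rw [hFy, mul_zero]
        exact zero_le
    -- assemble the chain
    calc ENNReal.ofReal (∫ y : Eucl n, Lam * max (-delta2 n Φ x y) 0 * ν x ‖y‖)
        ≤ ENNReal.ofReal (4*a*Gx*Lam*J) := ENNReal.ofReal_le_ofReal hIfmain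
      _ = ENNReal.ofReal (4*a*Gx*Lam) * ENNReal.ofReal J := by
          rw [← ENNReal.ofReal_mul h4aGL]
      _ = ENNReal.ofReal (4*a*Gx*Lam) * ∫⁻ y : Eucl n, F ‖y‖ := by rw [hofJ]
      _ ≤ ENNReal.ofReal (4*a*Gx*Lam) * ((n:ℝ≥0∞) * ∫⁻ y in Asec x, F ‖y‖) :=
          mul_le_mul_right hsec _
      _ = (ENNReal.ofReal (4*a*Gx*Lam) * (n:ℝ≥0∞)) * ∫⁻ y in Asec x, F ‖y‖ :=
          (mul_assoc _ _ _).symm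
      _ = ∫⁻ y in Asec x, (ENNReal.ofReal (4*a*Gx*Lam) * (n:ℝ≥0∞)) * F ‖y‖ := by
          rw [lintegral_const_mul _
            (show Measurable fun y : Eucl n => F ‖y‖ from hFmeas.comp measurable_norm)]
      _ ≤ ∫⁻ y in Asec x, ENNReal.ofReal (lam * max (delta2 n Φ x y) 0 * ν x ‖y‖) :=
          lintegral_mono_ae hkey
      _ ≤ ∫⁻ y : Eucl n, ENNReal.ofReal (lam * max (delta2 n Φ x y) 0 * ν x ‖y‖) :=
          setLIntegral_le_lintegral _ _

end BarrierProof
end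
end

section
/- Let ρ₀ > 0 be the exponent from the point-to-measure estimate. For every ρ₁ ∈ (0, ρ₀) there exists a constant C > 0 depending only on n, λ, Λ, c_U, α and ρ₁ with the following property (weak Harnack inequality). Let ν satisfy condition (A), let R > 0, let f : B_{2√n R} → ℝ be bounded, and let u ∈ C(B_{2√n R}) ∩ L^∞(ℝⁿ) be nonnegative on all of ℝⁿ and a viscosity supersolution of M⁻_ν u = |f| in B_{2√n R}. Then ( |𝒬_R|^{−1} ∫_{𝒬_R} u^{ρ₁} dx )^{1/ρ₁} ≤ C ( inf_{𝒬_{3R}} u + sup_{x∈B_{2√n R}} |f(x)|/h(x,R) ). -/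
open MeasureTheory Metric Set
open scoped ENNReal

noncomputable section

/-- **Theorem 5.4** (weak Harnack inequality); `ρ₀` is the exponent from the
point-to-measure estimate (Theorem 5.3). -/
theorem weak_harnack (n : ℕ) (hn : 1 ≤ n) (lam Lam cU α : ℝ)
    (hlam : 0 < lam) (hlamLam : lam ≤ Lam) (hcU : 0 < cU) (hα : 0 < α)
    (C₀ ρ₀ : ℝ) (hC₀ : 0 < C₀) (hρ₀ : 0 < ρ₀)
    (hPTM : ∀ ν : Eucl n → ℝ → ℝ, KernelOK n ν → CondA n ν cU α →
      ∀ R : ℝ, 0 < R →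
        ∀ f u : Eucl n → ℝ, IsBdd n f → IsBdd n u →
          ContinuousOn u (Metric.ball (0 : Eucl n) (2 * Real.sqrt n * R)) →
          (∀ x, 0 ≤ u x) →
          IsViscositySupersol n lam Lam ν u (fun x => |f x|)
            (Metric.ball (0 : Eucl n) (2 * Real.sqrt n * R)) →
          ∀ t : ℝ, 0 < t →
            volume {x ∈ cube n (0 : Eucl n) R | t < u x} ≤
              ENNReal.ofReal (C₀ * (sInf (u '' cube n 0 (3 * R)) +
                  sSup ((fun x => |f x| / hfun n ν x R) ''
                    Metric.ball (0 : Eucl n) (2 * Real.sqrt n * R))) ^ ρ₀ * t ^ (-ρ₀)) *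
                volume (cube n (0 : Eucl n) R)) :
    ∀ ρ₁ ∈ Set.Ioo (0 : ℝ) ρ₀, ∃ C : ℝ, 0 < C ∧
      ∀ ν : Eucl n → ℝ → ℝ, KernelOK n ν → CondA n ν cU α →
        ∀ R : ℝ, 0 < R →
          ∀ f u : Eucl n → ℝ, IsBdd n f → IsBdd n u →
            ContinuousOn u (Metric.ball (0 : Eucl n) (2 * Real.sqrt n * R)) →
            (∀ x, 0 ≤ u x) →
            IsViscositySupersol n lam Lam ν u (fun x => |f x|)
              (Metric.ball (0 : Eucl n) (2 * Real.sqrt n * R)) →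
            ((volume (cube n (0 : Eucl n) R)).toReal⁻¹ *
                ∫ x in cube n (0 : Eucl n) R, u x ^ ρ₁) ^ (1 / ρ₁) ≤
              C * (sInf (u '' cube n 0 (3 * R)) +
                sSup ((fun x => |f x| / hfun n ν x R) ''
                  Metric.ball (0 : Eucl n) (2 * Real.sqrt n * R))) := by
  intro ρ₁ hρ₁mem
  obtain ⟨hρ₁, hρ₁lt⟩ := hρ₁mem
  have hρdiff : 0 < ρ₀ - ρ₁ := by linarith
  set K : ℝ := 1 + ρ₁ * C₀ / (ρ₀ - ρ₁) with hKdef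
  have hKpos : 0 < K := by
    have h : 0 ≤ ρ₁ * C₀ / (ρ₀ - ρ₁) := by positivity
    rw [hKdef]
    linarith
  refine ⟨K ^ (1 / ρ₁), Real.rpow_pos_of_pos hKpos _, ?_⟩
  intro ν hker hcondA R hR f u hbf hbu hucont hunn hsupersol
  set A : ℝ := sInf (u '' cube n 0 (3 * R)) +
      sSup ((fun x => |f x| / hfun n ν x R) ''
        Metric.ball (0 : Eucl n) (2 * Real.sqrt n * R)) with hAdef
  set Q : Set (Eucl n) := cube n (0 : Eucl n) R with hQdef
  clear_value A Q
  -- the cube as a preimage of a box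
  have hQpre : Q = (MeasurableEquiv.toLp 2 (Fin n → ℝ)).symm ⁻¹'
      (Set.pi Set.univ fun _ : Fin n => Ioo (-(R / 2)) (R / 2)) := by
    ext y
    simp [hQdef, cube, MeasurableEquiv.coe_toLp_symm, Set.mem_pi, abs_lt,
      and_comm]
  have hQmeas : MeasurableSet Q := by
    rw [hQpre]
    exact (MeasurableEquiv.toLp 2 (Fin n → ℝ)).symm.measurable
      (MeasurableSet.univ_pi fun _ => measurableSet_Ioo)
  have hQvol : volume Q = ENNReal.ofReal R ^ n := by
    rw [hQpre, (EuclideanSpace.volume_preserving_symm_measurableEquiv_toLp (Fin n)).measure_preimage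
      ((MeasurableSet.univ_pi fun _ => measurableSet_Ioo).nullMeasurableSet)]
    rw [volume_pi_pi]
    simp [Real.volume_Ioo]
  have hQvolpos : 0 < volume Q := by
    rw [hQvol]; exact ENNReal.pow_pos (ENNReal.ofReal_pos.2 hR) n
  have hQvoltop : volume Q < ⊤ := by
    rw [hQvol]; exact ENNReal.pow_lt_top ENNReal.ofReal_lt_top
  have hmpos : 0 < (volume Q).toReal := ENNReal.toReal_pos hQvolpos.ne' hQvoltop.ne
  -- the cube is inside the ball
  have hQball : Q ⊆ Metric.ball (0 : Eucl n) (2 * Real.sqrt n * R) := by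
    intro y hy
    rw [hQdef] at hy
    have h1 : (1 : ℝ) ≤ Real.sqrt n := by
      rw [show (1 : ℝ) = Real.sqrt 1 by simp]
      exact Real.sqrt_le_sqrt (by exact_mod_cast hn)
    have hnorm : ‖y‖ ≤ Real.sqrt n * (R / 2) := by
      rw [EuclideanSpace.norm_eq]
      have hsum : ∑ i, ‖y i‖ ^ 2 ≤ (n : ℝ) * (R / 2) ^ 2 := by
        calc ∑ i, ‖y i‖ ^ 2 ≤ ∑ _i : Fin n, (R / 2) ^ 2 := by
              refine Finset.sum_le_sum fun i _ => ?_
              have := hy i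
              rw [show (0 : Eucl n) i = 0 from rfl, sub_zero] at this
              rw [Real.norm_eq_abs]
              nlinarith [abs_nonneg (y i)]
          _ = (n : ℝ) * (R / 2) ^ 2 := by simp [Finset.card_univ]
      calc Real.sqrt (∑ i, ‖y i‖ ^ 2) ≤ Real.sqrt ((n : ℝ) * (R / 2) ^ 2) :=
            Real.sqrt_le_sqrt hsum
        _ = Real.sqrt n * (R / 2) := by
            rw [Real.sqrt_mul (by positivity), Real.sqrt_sq (by positivity)]
    rw [Metric.mem_ball, dist_zero_right]
    nlinarith [Real.sqrt_nonneg (n : ℝ)]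
  -- measurability facts
  have hQcont : ContinuousOn u Q := hucont.mono hQball
  have humeas : AEMeasurable u (volume.restrict Q) := hQcont.aemeasurable hQmeas
  have hrpow_contOn : ContinuousOn (fun x => u x ^ ρ₁) Q :=
    hQcont.rpow_const fun x _ => Or.inr hρ₁.le
  have hrpow_meas : AEStronglyMeasurable (fun x => u x ^ ρ₁) (volume.restrict Q) :=
    hrpow_contOn.aestronglyMeasurable hQmeas
  -- the Bochner integral as a lintegral
  have hint : ∫ x in Q, u x ^ ρ₁ =
      (∫⁻ x in Q, ENNReal.ofReal (u x ^ ρ₁)).toReal :=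
    integral_eq_lintegral_of_nonneg_ae
      (Filter.Eventually.of_forall fun x => Real.rpow_nonneg (hunn x) ρ₁) hrpow_meas
  have hintnn : 0 ≤ ∫ x in Q, u x ^ ρ₁ :=
    setIntegral_nonneg hQmeas fun x _ => Real.rpow_nonneg (hunn x) ρ₁
  -- layer cake
  have hlayer : ∫⁻ x in Q, ENNReal.ofReal (u x ^ ρ₁) =
      ENNReal.ofReal ρ₁ * ∫⁻ t in Ioi (0 : ℝ),
        (volume.restrict Q) {a | t < u a} * ENNReal.ofReal (t ^ (ρ₁ - 1)) :=
    lintegral_rpow_eq_lintegral_meas_lt_mul (volume.restrict Q)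
      (Filter.Eventually.of_forall fun x => hunn x) humeas hρ₁
  -- point-to-measure estimate for the restricted measure
  have hmu : ∀ t : ℝ, 0 < t → (volume.restrict Q) {a | t < u a} ≤
      ENNReal.ofReal (C₀ * A ^ ρ₀ * t ^ (-ρ₀)) * volume Q := by
    intro t ht
    have h1 := hPTM ν hker hcondA R hR f u hbf hbu hucont hunn hsupersol t ht
    rw [Measure.restrict_apply' hQmeas]
    have h2 : {a | t < u a} ∩ Q = {x ∈ Q | t < u x} := by
      ext x; simp [and_comm]
    rw [h2, hQdef, hAdef]
    exact h1
  -- nonnegativity of A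
  have hhnn : ∀ x : Eucl n, 0 ≤ hfun n ν x R := by
    intro x
    refine integral_nonneg fun y => ?_
    rcases eq_or_ne y 0 with rfl | hy
    · simp
    · have hy' : 0 < ‖y‖ := norm_pos_iff.2 hy
      exact mul_nonneg (le_min zero_le_one (by positivity)) (hker.2.1 x _ hy')
  have hA0 : 0 ≤ A := by
    rw [hAdef]
    have hinf : 0 ≤ sInf (u '' cube n 0 (3 * R)) := by
      apply Real.sInf_nonneg
      rintro x ⟨y, -, rfl⟩; exact hunn y
    have hsup : 0 ≤ sSup ((fun x => |f x| / hfun n ν x R) ''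
        Metric.ball (0 : Eucl n) (2 * Real.sqrt n * R)) := by
      apply Real.sSup_nonneg
      rintro x ⟨y, -, rfl⟩
      exact div_nonneg (abs_nonneg _) (hhnn y)
    linarith
  -- measurable integrand for the t-integral
  have htmeas : ∀ c : ℝ, Measurable fun t : ℝ => ENNReal.ofReal (t ^ c) :=
    fun c => (measurable_id.pow_const c).ennreal_ofReal
  rcases eq_or_lt_of_le hA0 with hAz | hApos
  · -- A = 0 : the measure of every superlevel set vanishes
    have hJ0 : (∫⁻ t in Ioi (0 : ℝ),
        (volume.restrict Q) {a | t < u a} * ENNReal.ofReal (t ^ (ρ₁ - 1))) = 0 := by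
      have : ∀ t ∈ Ioi (0 : ℝ),
          (volume.restrict Q) {a | t < u a} * ENNReal.ofReal (t ^ (ρ₁ - 1)) = 0 := by
        intro t ht
        have h1 := hmu t ht
        rw [← hAz, Real.zero_rpow hρ₀.ne', mul_zero, zero_mul, ENNReal.ofReal_zero,
          zero_mul] at h1
        rw [le_zero_iff.1 h1, zero_mul]
      calc (∫⁻ t in Ioi (0 : ℝ),
            (volume.restrict Q) {a | t < u a} * ENNReal.ofReal (t ^ (ρ₁ - 1)))
          = ∫⁻ _t in Ioi (0 : ℝ), 0 := setLIntegral_congr_fun measurableSet_Ioi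
            this
        _ = 0 := by simp
    rw [hint, hlayer, hJ0, mul_zero, ENNReal.toReal_zero, mul_zero,
      Real.zero_rpow (by positivity : 1 / ρ₁ ≠ 0), ← hAz, mul_zero]
  · -- A > 0
    -- split the t-integral at A
    have hsplit : Ioi (0 : ℝ) = Ioc 0 A ∪ Ioi A := (Ioc_union_Ioi_eq_Ioi hA0).symm
    set F : ℝ → ℝ≥0∞ := fun t =>
      (volume.restrict Q) {a | t < u a} * ENNReal.ofReal (t ^ (ρ₁ - 1)) with hF
    have hunion : (∫⁻ t in Ioi (0 : ℝ), F t) =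
        (∫⁻ t in Ioc 0 A, F t) + ∫⁻ t in Ioi A, F t := by
      rw [hsplit]
      exact lintegral_union measurableSet_Ioi (Ioc_disjoint_Ioi le_rfl)
    -- first piece
    have hIoc : (∫⁻ t in Ioc (0 : ℝ) A, ENNReal.ofReal (t ^ (ρ₁ - 1))) =
        ENNReal.ofReal (A ^ ρ₁ / ρ₁) := by
      have hInt : IntegrableOn (fun t : ℝ => t ^ (ρ₁ - 1)) (Ioc 0 A) := by
        have := intervalIntegral.intervalIntegrable_rpow' (a := 0) (b := A)
          (by linarith : (-1 : ℝ) < ρ₁ - 1)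
        rwa [intervalIntegrable_iff_integrableOn_Ioc_of_le hA0] at this
      rw [← ofReal_integral_eq_lintegral_ofReal hInt
        ((ae_restrict_iff' measurableSet_Ioc).2 (Filter.Eventually.of_forall
          fun t ht => Real.rpow_nonneg ht.1.le _))]
      congr 1
      rw [← intervalIntegral.integral_of_le hA0,
        integral_rpow (Or.inl (by linarith : (-1 : ℝ) < ρ₁ - 1)), sub_add_cancel,
        Real.zero_rpow hρ₁.ne', sub_zero]
    have hpiece1 : (∫⁻ t in Ioc (0 : ℝ) A, F t) ≤
        volume Q * ENNReal.ofReal (A ^ ρ₁ / ρ₁) := by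
      calc (∫⁻ t in Ioc (0 : ℝ) A, F t)
          ≤ ∫⁻ t in Ioc (0 : ℝ) A, volume Q * ENNReal.ofReal (t ^ (ρ₁ - 1)) := by
            refine setLIntegral_mono (measurable_const.mul (htmeas _)) fun t ht => ?_
            refine mul_le_mul_left ?_ _
            calc (volume.restrict Q) {a | t < u a} ≤ (volume.restrict Q) Set.univ :=
                  measure_mono (subset_univ _)
              _ = volume Q := by rw [Measure.restrict_apply_univ]
        _ = volume Q * ∫⁻ t in Ioc (0 : ℝ) A, ENNReal.ofReal (t ^ (ρ₁ - 1)) :=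
            lintegral_const_mul _ (htmeas _)
        _ = volume Q * ENNReal.ofReal (A ^ ρ₁ / ρ₁) := by rw [hIoc]
    -- second piece
    have hIoi : (∫⁻ t in Ioi A, ENNReal.ofReal (t ^ (ρ₁ - ρ₀ - 1))) =
        ENNReal.ofReal (A ^ (ρ₁ - ρ₀) / (ρ₀ - ρ₁)) := by
      rw [← ofReal_integral_eq_lintegral_ofReal
        (integrableOn_Ioi_rpow_of_lt (by linarith) hApos)
        ((ae_restrict_iff' measurableSet_Ioi).2 (Filter.Eventually.of_forall
          fun t ht => Real.rpow_nonneg (hApos.trans ht).le _))]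
      congr 1
      rw [integral_Ioi_rpow_of_lt (by linarith) hApos,
        show ρ₁ - ρ₀ - 1 + 1 = ρ₁ - ρ₀ by ring,
        show ρ₀ - ρ₁ = -(ρ₁ - ρ₀) by ring, div_neg, neg_div]
    have hpiece2 : (∫⁻ t in Ioi A, F t) ≤
        volume Q * (ENNReal.ofReal (C₀ * A ^ ρ₀) *
          ENNReal.ofReal (A ^ (ρ₁ - ρ₀) / (ρ₀ - ρ₁))) := by
      calc (∫⁻ t in Ioi A, F t)
          ≤ ∫⁻ t in Ioi A, volume Q * ENNReal.ofReal (C₀ * A ^ ρ₀) *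
              ENNReal.ofReal (t ^ (ρ₁ - ρ₀ - 1)) := by
            refine setLIntegral_mono (by exact (measurable_const.mul (htmeas _)))
              fun t ht => ?_
            have ht0 : (0 : ℝ) < t := hApos.trans ht
            have h1 : F t ≤ ENNReal.ofReal (C₀ * A ^ ρ₀ * t ^ (-ρ₀)) * volume Q *
                ENNReal.ofReal (t ^ (ρ₁ - 1)) :=
              mul_le_mul_left (hmu t ht0) _
            refine h1.trans (le_of_eq ?_)
            rw [ENNReal.ofReal_mul (by positivity : (0:ℝ) ≤ C₀ * A ^ ρ₀)]
            rw [show ENNReal.ofReal (C₀ * A ^ ρ₀) * ENNReal.ofReal (t ^ (-ρ₀)) *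
                volume Q * ENNReal.ofReal (t ^ (ρ₁ - 1)) =
                volume Q * ENNReal.ofReal (C₀ * A ^ ρ₀) *
                (ENNReal.ofReal (t ^ (-ρ₀)) * ENNReal.ofReal (t ^ (ρ₁ - 1))) by ring]
            congr 1
            rw [← ENNReal.ofReal_mul (Real.rpow_nonneg ht0.le _),
              ← Real.rpow_add ht0, show -ρ₀ + (ρ₁ - 1) = ρ₁ - ρ₀ - 1 by ring]
        _ = volume Q * ENNReal.ofReal (C₀ * A ^ ρ₀) *
              ∫⁻ t in Ioi A, ENNReal.ofReal (t ^ (ρ₁ - ρ₀ - 1)) :=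
            lintegral_const_mul _ (htmeas _)
        _ = volume Q * (ENNReal.ofReal (C₀ * A ^ ρ₀) *
              ENNReal.ofReal (A ^ (ρ₁ - ρ₀) / (ρ₀ - ρ₁))) := by rw [hIoi, mul_assoc]
    -- combine
    have hB : ρ₁ * (A ^ ρ₁ / ρ₁ + C₀ * A ^ ρ₀ * (A ^ (ρ₁ - ρ₀) / (ρ₀ - ρ₁))) =
        K * A ^ ρ₁ := by
      have hpow : A ^ ρ₀ * A ^ (ρ₁ - ρ₀) = A ^ ρ₁ := by
        rw [← Real.rpow_add hApos]; ring_nf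
      rw [hKdef, ← hpow]
      field_simp
    have hmain : (∫⁻ x in Q, ENNReal.ofReal (u x ^ ρ₁)) ≤
        volume Q * ENNReal.ofReal (K * A ^ ρ₁) := by
      rw [hlayer]
      calc ENNReal.ofReal ρ₁ * ∫⁻ t in Ioi (0 : ℝ), F t
          ≤ ENNReal.ofReal ρ₁ * (volume Q * ENNReal.ofReal (A ^ ρ₁ / ρ₁) +
              volume Q * (ENNReal.ofReal (C₀ * A ^ ρ₀) *
                ENNReal.ofReal (A ^ (ρ₁ - ρ₀) / (ρ₀ - ρ₁)))) := by
            rw [hunion]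
            exact mul_le_mul_right (add_le_add hpiece1 hpiece2) _
        _ = volume Q * ENNReal.ofReal (K * A ^ ρ₁) := by
            rw [← mul_add, ← ENNReal.ofReal_mul (by positivity : (0:ℝ) ≤ C₀ * A ^ ρ₀),
              ← ENNReal.ofReal_add (by positivity)
                (mul_nonneg (by positivity)
                  (div_nonneg (Real.rpow_nonneg hA0 _) hρdiff.le)),
              ← mul_assoc, mul_comm (ENNReal.ofReal ρ₁) (volume Q), mul_assoc,
              ← ENNReal.ofReal_mul hρ₁.le, hB]
    -- pass to real numbers
    have hreal : ∫ x in Q, u x ^ ρ₁ ≤ (volume Q).toReal * (K * A ^ ρ₁) := by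
      rw [hint]
      calc (∫⁻ x in Q, ENNReal.ofReal (u x ^ ρ₁)).toReal
          ≤ (volume Q * ENNReal.ofReal (K * A ^ ρ₁)).toReal :=
            ENNReal.toReal_mono
              (ENNReal.mul_ne_top hQvoltop.ne ENNReal.ofReal_ne_top) hmain
        _ = (volume Q).toReal * (K * A ^ ρ₁) := by
            rw [ENNReal.toReal_mul, ENNReal.toReal_ofReal (by positivity)]
    have hfin : (volume Q).toReal⁻¹ * ∫ x in Q, u x ^ ρ₁ ≤ K * A ^ ρ₁ := by
      rw [show K * A ^ ρ₁ = (volume Q).toReal⁻¹ * ((volume Q).toReal * (K * A ^ ρ₁))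
        by field_simp]
      exact mul_le_mul_of_nonneg_left hreal (by positivity)
    calc ((volume Q).toReal⁻¹ * ∫ x in Q, u x ^ ρ₁) ^ (1 / ρ₁)
        ≤ (K * A ^ ρ₁) ^ (1 / ρ₁) :=
          Real.rpow_le_rpow (by positivity) hfin (by positivity)
      _ = K ^ (1 / ρ₁) * A := by
          rw [Real.mul_rpow hKpos.le (Real.rpow_nonneg hA0 _),
            ← Real.rpow_mul hA0, mul_one_div_cancel hρ₁.ne', Real.rpow_one]
end
end

section
/- Let ν satisfy (A1) and (A2). Then the following are equivalent: (1) there exist constants α > 0 and c_U > 0 such that h(x,tr) ≤ c_U t^{−α} h(x,r) for all x ∈ ℝⁿ, all r > 0 and all t ≥ 1 (the weak scaling condition (A3)); (2) there exists a constant C₁ > 0 such that h(x,r) ≤ C₁ K(x,r) for all x ∈ ℝⁿ and all r > 0. -/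
open MeasureTheory Metric Set
open scoped ENNReal

noncomputable section

namespace WS

/-- Tail integral of `ν`. -/
def Lfn (n : ℕ) (ν : Eucl n → ℝ → ℝ) (x : Eucl n) (r : ℝ) : ℝ :=
  ∫ y in (Metric.ball (0 : Eucl n) r)ᶜ, ν x ‖y‖

/-- Numerator of `Kfun`. -/
def Ifn (n : ℕ) (ν : Eucl n → ℝ → ℝ) (x : Eucl n) (r : ℝ) : ℝ :=
  ∫ y in Metric.ball (0 : Eucl n) r, ‖y‖ ^ 2 * ν x ‖y‖

variable {n : ℕ} {ν : Eucl n → ℝ → ℝ} {x : Eucl n} {r R t : ℝ}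

lemma mem_ball_norm {y : Eucl n} : y ∈ Metric.ball (0 : Eucl n) r ↔ ‖y‖ < r := by
  simp [Metric.mem_ball]

lemma notmem_ball_norm {y : Eucl n} : y ∉ Metric.ball (0 : Eucl n) r ↔ r ≤ ‖y‖ := by
  simp [Metric.mem_ball, not_lt]

lemma meas_f (hmeas : Measurable (Function.uncurry ν)) :
    Measurable fun y : Eucl n => ν x ‖y‖ :=
  hmeas.comp (measurable_const.prodMk measurable_norm)

lemma ae_nonneg_f (hn : 1 ≤ n) (hnonneg : ∀ x r, 0 < r → 0 ≤ ν x r) :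
    ∀ᵐ y : Eucl n, 0 ≤ ν x ‖y‖ := by
  haveI : Nonempty (Fin n) := ⟨⟨0, hn⟩⟩
  have h0 : (volume : Measure (Eucl n)) {(0 : Eucl n)} = 0 := measure_singleton 0
  have h1 : ∀ᵐ y : Eucl n, y ≠ 0 := by
    refine ae_iff.mpr ?_
    simpa using h0
  filter_upwards [h1] with y hy
  exact hnonneg x ‖y‖ (norm_pos_iff.mpr hy)

lemma ae_nonneg_sq (hn : 1 ≤ n) (hnonneg : ∀ x r, 0 < r → 0 ≤ ν x r) :
    ∀ᵐ y : Eucl n, 0 ≤ ‖y‖ ^ 2 * ν x ‖y‖ := by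
  filter_upwards [ae_nonneg_f hn hnonneg] with y hy
  exact mul_nonneg (by positivity) hy

lemma min_nonneg' {a : ℝ} (ha : 0 ≤ a) : 0 ≤ min 1 a := le_min zero_le_one ha

lemma integrable_min (hn : 1 ≤ n) (hmeas : Measurable (Function.uncurry ν))
    (hnonneg : ∀ x r, 0 < r → 0 ≤ ν x r)
    (hint : ∀ x : Eucl n, Integrable (fun y : Eucl n => min 1 (‖y‖ ^ 2) * ν x ‖y‖))
    (hr : 0 < r) :
    Integrable (fun y : Eucl n => min 1 (‖y‖ ^ 2 / r ^ 2) * ν x ‖y‖) := by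
  refine Integrable.mono' ((hint x).const_mul (max 1 (r ^ 2)⁻¹)) ?_ ?_
  · exact ((measurable_const.min ((measurable_norm.pow_const 2).div_const _)).mul
      (meas_f hmeas)).aestronglyMeasurable
  · filter_upwards [ae_nonneg_f hn hnonneg] with y hy
    have h1 : 0 ≤ min 1 (‖y‖ ^ 2 / r ^ 2) := min_nonneg' (by positivity)
    rw [Real.norm_eq_abs, abs_of_nonneg (mul_nonneg h1 hy)]
    have h2 : min 1 (‖y‖ ^ 2 / r ^ 2) ≤ max 1 (r ^ 2)⁻¹ * min 1 (‖y‖ ^ 2) := by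
      rcases le_total (‖y‖ ^ 2) 1 with h | h
      · rw [min_eq_right h]
        calc min 1 (‖y‖ ^ 2 / r ^ 2) ≤ ‖y‖ ^ 2 / r ^ 2 := min_le_right _ _
          _ = (r ^ 2)⁻¹ * ‖y‖ ^ 2 := by ring
          _ ≤ max 1 (r ^ 2)⁻¹ * ‖y‖ ^ 2 :=
            mul_le_mul_of_nonneg_right (le_max_right _ _) (by positivity)
      · rw [min_eq_left h]
        calc min 1 (‖y‖ ^ 2 / r ^ 2) ≤ 1 := min_le_left _ _
          _ ≤ max 1 (r ^ 2)⁻¹ := le_max_left _ _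
          _ = max 1 (r ^ 2)⁻¹ * 1 := (mul_one _).symm
    calc min 1 (‖y‖ ^ 2 / r ^ 2) * ν x ‖y‖
        ≤ (max 1 (r ^ 2)⁻¹ * min 1 (‖y‖ ^ 2)) * ν x ‖y‖ := mul_le_mul_of_nonneg_right h2 hy
      _ = max 1 (r ^ 2)⁻¹ * (min 1 (‖y‖ ^ 2) * ν x ‖y‖) := by ring

lemma integrableOn_sq_ball (hn : 1 ≤ n) (hmeas : Measurable (Function.uncurry ν))
    (hnonneg : ∀ x r, 0 < r → 0 ≤ ν x r)
    (hint : ∀ x : Eucl n, Integrable (fun y : Eucl n => min 1 (‖y‖ ^ 2) * ν x ‖y‖)) :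
    IntegrableOn (fun y : Eucl n => ‖y‖ ^ 2 * ν x ‖y‖) (Metric.ball (0 : Eucl n) R) := by
  refine Integrable.mono' (((hint x).const_mul (max 1 (R ^ 2))).restrict)
    (((measurable_norm.pow_const 2).mul (meas_f hmeas)).aestronglyMeasurable) ?_
  filter_upwards [ae_restrict_mem measurableSet_ball,
    ae_restrict_of_ae (ae_nonneg_f hn hnonneg)] with y hmem hy
  have hyR : ‖y‖ < R := mem_ball_norm.mp hmem
  rw [Real.norm_eq_abs, abs_of_nonneg (mul_nonneg (by positivity) hy)]
  rcases le_total (‖y‖ ^ 2) 1 with h | h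
  · calc ‖y‖ ^ 2 * ν x ‖y‖ = 1 * (min 1 (‖y‖ ^ 2) * ν x ‖y‖) := by rw [min_eq_right h]; ring
      _ ≤ max 1 (R ^ 2) * (min 1 (‖y‖ ^ 2) * ν x ‖y‖) :=
        mul_le_mul_of_nonneg_right (le_max_left _ _)
          (mul_nonneg (min_nonneg' (by positivity)) hy)
  · have hR2 : ‖y‖ ^ 2 ≤ R ^ 2 := by nlinarith [norm_nonneg y]
    calc ‖y‖ ^ 2 * ν x ‖y‖ ≤ R ^ 2 * ν x ‖y‖ := mul_le_mul_of_nonneg_right hR2 hy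
      _ = R ^ 2 * (min 1 (‖y‖ ^ 2) * ν x ‖y‖) := by rw [min_eq_left h, one_mul]
      _ ≤ max 1 (R ^ 2) * (min 1 (‖y‖ ^ 2) * ν x ‖y‖) :=
        mul_le_mul_of_nonneg_right (le_max_right _ _)
          (mul_nonneg (min_nonneg' (by positivity)) hy)

lemma integrableOn_f_compl (hn : 1 ≤ n) (hmeas : Measurable (Function.uncurry ν))
    (hnonneg : ∀ x r, 0 < r → 0 ≤ ν x r)
    (hint : ∀ x : Eucl n, Integrable (fun y : Eucl n => min 1 (‖y‖ ^ 2) * ν x ‖y‖))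
    (hr : 0 < r) :
    IntegrableOn (fun y : Eucl n => ν x ‖y‖) (Metric.ball (0 : Eucl n) r)ᶜ := by
  have hpos : 0 < min 1 (r ^ 2) := lt_min one_pos (by positivity)
  refine Integrable.mono' (((hint x).const_mul (min 1 (r ^ 2))⁻¹).restrict)
    ((meas_f hmeas).aestronglyMeasurable) ?_
  filter_upwards [ae_restrict_mem measurableSet_ball.compl,
    ae_restrict_of_ae (ae_nonneg_f hn hnonneg)] with y hmem hy
  have hyr : r ≤ ‖y‖ := notmem_ball_norm.mp hmem
  rw [Real.norm_eq_abs, abs_of_nonneg hy]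
  have hmin : min 1 (r ^ 2) ≤ min 1 (‖y‖ ^ 2) := by
    refine min_le_min le_rfl ?_
    nlinarith
  calc ν x ‖y‖ = (min 1 (r ^ 2))⁻¹ * (min 1 (r ^ 2) * ν x ‖y‖) := by
        field_simp
    _ ≤ (min 1 (r ^ 2))⁻¹ * (min 1 (‖y‖ ^ 2) * ν x ‖y‖) := by
        refine mul_le_mul_of_nonneg_left (mul_le_mul_of_nonneg_right hmin hy) ?_
        positivity

lemma hfun_split (hn : 1 ≤ n) (hmeas : Measurable (Function.uncurry ν))
    (hnonneg : ∀ x r, 0 < r → 0 ≤ ν x r)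
    (hint : ∀ x : Eucl n, Integrable (fun y : Eucl n => min 1 (‖y‖ ^ 2) * ν x ‖y‖))
    (hr : 0 < r) :
    hfun n ν x r = Kfun n ν x r + Lfn n ν x r := by
  have hInt := integrable_min (x := x) hn hmeas hnonneg hint hr
  have h1 := integral_add_compl (s := Metric.ball (0 : Eucl n) r) (μ := volume) measurableSet_ball hInt
  rw [hfun, ← h1]
  congr 1
  · rw [Kfun, setIntegral_congr_fun measurableSet_ball
      (g := fun y : Eucl n => (r ^ 2)⁻¹ * (‖y‖ ^ 2 * ν x ‖y‖)) ?_]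
    · rw [MeasureTheory.integral_const_mul, ← div_eq_inv_mul]
    · intro y hy
      have h2 : ‖y‖ < r := mem_ball_norm.mp hy
      have h3 : ‖y‖ ^ 2 / r ^ 2 ≤ 1 := by
        rw [div_le_one (by positivity)]
        nlinarith [norm_nonneg y]
      simp only [min_eq_right h3]
      ring
  · rw [Lfn]
    refine setIntegral_congr_fun measurableSet_ball.compl fun y hy => ?_
    have h2 : r ≤ ‖y‖ := notmem_ball_norm.mp hy
    have h3 : (1 : ℝ) ≤ ‖y‖ ^ 2 / r ^ 2 := by
      rw [le_div_iff₀ (by positivity)]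
      nlinarith
    simp only [min_eq_left h3, one_mul]

lemma Lfn_nonneg (hn : 1 ≤ n) (hnonneg : ∀ x r, 0 < r → 0 ≤ ν x r) :
    0 ≤ Lfn n ν x r :=
  integral_nonneg_of_ae (ae_restrict_of_ae (ae_nonneg_f hn hnonneg))

lemma Ifn_nonneg (hn : 1 ≤ n) (hnonneg : ∀ x r, 0 < r → 0 ≤ ν x r) :
    0 ≤ Ifn n ν x r :=
  integral_nonneg_of_ae (ae_restrict_of_ae (ae_nonneg_sq hn hnonneg))

lemma Kfun_nonneg (hn : 1 ≤ n) (hnonneg : ∀ x r, 0 < r → 0 ≤ ν x r) :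
    0 ≤ Kfun n ν x r :=
  div_nonneg (Ifn_nonneg hn hnonneg) (by positivity)

lemma hfun_anti (hn : 1 ≤ n) (hmeas : Measurable (Function.uncurry ν))
    (hnonneg : ∀ x r, 0 < r → 0 ≤ ν x r)
    (hint : ∀ x : Eucl n, Integrable (fun y : Eucl n => min 1 (‖y‖ ^ 2) * ν x ‖y‖))
    (hr : 0 < r) (hrR : r ≤ R) :
    hfun n ν x R ≤ hfun n ν x r := by
  refine integral_mono_ae (integrable_min hn hmeas hnonneg hint (hr.trans_le hrR))
    (integrable_min hn hmeas hnonneg hint hr) ?_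
  filter_upwards [ae_nonneg_f hn hnonneg] with y hy
  have h2 : ‖y‖ ^ 2 / R ^ 2 ≤ ‖y‖ ^ 2 / r ^ 2 :=
    div_le_div_of_nonneg_left (by positivity) (by positivity) (by nlinarith)
  exact mul_le_mul_of_nonneg_right (min_le_min le_rfl h2) hy

lemma hfun_pos (hn : 1 ≤ n) (hmeas : Measurable (Function.uncurry ν))
    (hnonneg : ∀ x r, 0 < r → 0 ≤ ν x r)
    (hint : ∀ x : Eucl n, Integrable (fun y : Eucl n => min 1 (‖y‖ ^ 2) * ν x ‖y‖))
    (hA1 : CondA1 n ν) (hr : 0 < r) :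
    0 < hfun n ν x r := by
  rcases le_total r 1 with h | h
  · have h2 := hfun_anti (x := x) hn hmeas hnonneg hint hr h
    rw [hA1 x] at h2
    linarith
  · have key : (r ^ 2)⁻¹ * hfun n ν x 1 ≤ hfun n ν x r := by
      rw [hfun, ← MeasureTheory.integral_const_mul]
      refine integral_mono_ae ((integrable_min hn hmeas hnonneg hint one_pos).const_mul _)
        (integrable_min hn hmeas hnonneg hint hr) ?_
      filter_upwards [ae_nonneg_f hn hnonneg] with y hy
      have h1 : (r ^ 2)⁻¹ * min 1 (‖y‖ ^ 2 / 1 ^ 2) ≤ min 1 (‖y‖ ^ 2 / r ^ 2) := by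
        rw [one_pow, div_one]
        refine le_min ?_ ?_
        · have ha : min 1 (‖y‖ ^ 2) ≤ 1 := min_le_left _ _
          have hb : (r ^ 2)⁻¹ ≤ 1 := by
            rw [inv_le_one_iff₀]; right; nlinarith
          nlinarith [min_nonneg' (a := ‖y‖ ^ 2) (by positivity)]
        · calc (r ^ 2)⁻¹ * min 1 (‖y‖ ^ 2) ≤ (r ^ 2)⁻¹ * ‖y‖ ^ 2 :=
              mul_le_mul_of_nonneg_left (min_le_right _ _) (by positivity)
            _ = ‖y‖ ^ 2 / r ^ 2 := by rw [div_eq_inv_mul]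
      calc (r ^ 2)⁻¹ * (min 1 (‖y‖ ^ 2 / 1 ^ 2) * ν x ‖y‖)
          = ((r ^ 2)⁻¹ * min 1 (‖y‖ ^ 2 / 1 ^ 2)) * ν x ‖y‖ := by ring
        _ ≤ min 1 (‖y‖ ^ 2 / r ^ 2) * ν x ‖y‖ := mul_le_mul_of_nonneg_right h1 hy
    rw [hA1 x, mul_one] at key
    have : (0 : ℝ) < (r ^ 2)⁻¹ := by positivity
    linarith

lemma Ifn_split (hn : 1 ≤ n) (hmeas : Measurable (Function.uncurry ν))
    (hnonneg : ∀ x r, 0 < r → 0 ≤ ν x r)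
    (hint : ∀ x : Eucl n, Integrable (fun y : Eucl n => min 1 (‖y‖ ^ 2) * ν x ‖y‖))
    (hrR : r ≤ R) :
    Ifn n ν x R = Ifn n ν x r
      + ∫ y in Metric.ball (0 : Eucl n) R \ Metric.ball (0 : Eucl n) r, ‖y‖ ^ 2 * ν x ‖y‖ := by
  have hb : Metric.ball (0 : Eucl n) R
      = Metric.ball (0 : Eucl n) r ∪ (Metric.ball (0 : Eucl n) R \ Metric.ball (0 : Eucl n) r) :=
    (union_diff_cancel (Metric.ball_subset_ball hrR)).symm
  rw [Ifn, Ifn]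
  nth_rewrite 1 [hb]
  rw [setIntegral_union disjoint_sdiff_right
    (measurableSet_ball.diff measurableSet_ball)
    (integrableOn_sq_ball hn hmeas hnonneg hint)
    ((integrableOn_sq_ball hn hmeas hnonneg hint (R := R)).mono_set diff_subset)]

lemma Lfn_split (hn : 1 ≤ n) (hmeas : Measurable (Function.uncurry ν))
    (hnonneg : ∀ x r, 0 < r → 0 ≤ ν x r)
    (hint : ∀ x : Eucl n, Integrable (fun y : Eucl n => min 1 (‖y‖ ^ 2) * ν x ‖y‖))
    (hr : 0 < r) (hrR : r ≤ R) :
    Lfn n ν x r = (∫ y in Metric.ball (0 : Eucl n) R \ Metric.ball (0 : Eucl n) r, ν x ‖y‖)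
      + Lfn n ν x R := by
  have hb : (Metric.ball (0 : Eucl n) r)ᶜ
      = (Metric.ball (0 : Eucl n) R \ Metric.ball (0 : Eucl n) r)
        ∪ (Metric.ball (0 : Eucl n) R)ᶜ := by
    ext y
    simp only [mem_compl_iff, mem_union, mem_diff]
    constructor
    · intro h
      by_cases h2 : y ∈ Metric.ball (0 : Eucl n) R
      · exact Or.inl ⟨h2, h⟩
      · exact Or.inr h2
    · rintro (⟨-, h⟩ | h2)
      · exact h
      · exact fun hy => h2 (Metric.ball_subset_ball hrR hy)
  rw [Lfn, Lfn, hb, setIntegral_union (disjoint_compl_right.mono_left diff_subset)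
    measurableSet_ball.compl
    ((integrableOn_f_compl hn hmeas hnonneg hint hr).mono_set fun y hy => hy.2)
    (integrableOn_f_compl hn hmeas hnonneg hint (hr.trans_le hrR))]

lemma Kfun_eq : Kfun n ν x r = Ifn n ν x r / r ^ 2 := rfl

lemma vol_ball_toReal (hn : 1 ≤ n) (hR : 0 ≤ R) :
    (volume (Metric.ball (0 : Eucl n) R)).toReal
      = R ^ n * (volume (Metric.ball (0 : Eucl n) 1)).toReal := by
  haveI : Nontrivial (Eucl n) :=
    nontrivial_of_ne (EuclideanSpace.single ⟨0, hn⟩ (1 : ℝ)) 0 (by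
      intro h
      have := congrArg (fun v : Eucl n => v ⟨0, hn⟩) h
      simpa [EuclideanSpace.single] using this)
  rw [Measure.addHaar_ball _ _ hR, ENNReal.toReal_mul, ENNReal.toReal_ofReal (by positivity)]
  rw [finrank_euclideanSpace_fin]

/-- Lower bound for `K` in terms of `ν x r`. -/
lemma nu_le_K (hn : 1 ≤ n) (hmeas : Measurable (Function.uncurry ν))
    (hnonneg : ∀ x r, 0 < r → 0 ≤ ν x r)
    (hint : ∀ x : Eucl n, Integrable (fun y : Eucl n => min 1 (‖y‖ ^ 2) * ν x ‖y‖))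
    (hA2 : CondA2 n ν) (hr : 0 < r) :
    ν x r * (r ^ n * (volume (Metric.ball (0 : Eucl n) 1)).toReal) ≤ 8 * Kfun n ν x r := by
  set v := (volume (Metric.ball (0 : Eucl n) 1)).toReal with hv
  have hv0 : 0 ≤ v := ENNReal.toReal_nonneg
  set S := Metric.ball (0 : Eucl n) r \ Metric.ball (0 : Eucl n) (r / 2) with hS
  have hSmeas : MeasurableSet S := measurableSet_ball.diff measurableSet_ball
  have hvolS : (volume S).toReal = (r ^ n - (r / 2) ^ n) * v := by
    rw [hS, measure_diff (Metric.ball_subset_ball (by linarith))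
      measurableSet_ball.nullMeasurableSet measure_ball_lt_top.ne,
      ENNReal.toReal_sub_of_le (measure_mono (Metric.ball_subset_ball (by linarith)))
        measure_ball_lt_top.ne,
      vol_ball_toReal hn hr.le, vol_ball_toReal (R := r / 2) hn (by linarith)]
    ring
  have hvolS' : (1 / 2 : ℝ) * r ^ n * v ≤ (volume S).toReal := by
    rw [hvolS]
    have h1 : (r / 2) ^ n ≤ (1 / 2) * r ^ n := by
      rw [div_pow]
      rw [div_eq_mul_inv, mul_comm]
      have h2 : ((2 : ℝ) ^ n)⁻¹ ≤ (2 : ℝ)⁻¹ := by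
        apply inv_anti₀ (by norm_num)
        calc (2 : ℝ) = 2 ^ 1 := (pow_one 2).symm
          _ ≤ 2 ^ n := pow_le_pow_right₀ (by norm_num) hn
      have h3 : (0 : ℝ) ≤ r ^ n := by positivity
      calc ((2:ℝ) ^ n)⁻¹ * r ^ n ≤ (2:ℝ)⁻¹ * r ^ n := mul_le_mul_of_nonneg_right h2 h3
        _ = 1 / 2 * r ^ n := by norm_num
    nlinarith
  have hlow : (r / 2) ^ 2 * ν x r * (volume S).toReal ≤ Ifn n ν x r := by
    have step1 : ∫ y in S, (r / 2) ^ 2 * ν x r ≤ ∫ y in S, ‖y‖ ^ 2 * ν x ‖y‖ := by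
      refine setIntegral_mono_on
        (integrableOn_const (lt_of_le_of_lt (measure_mono diff_subset)
          measure_ball_lt_top).ne)
        ((integrableOn_sq_ball hn hmeas hnonneg hint).mono_set diff_subset) hSmeas ?_
      intro y hy
      have h1 : r / 2 ≤ ‖y‖ := notmem_ball_norm.mp hy.2
      have h2 : ‖y‖ < r := mem_ball_norm.mp hy.1
      have h3 : 0 < ‖y‖ := lt_of_lt_of_le (by linarith) h1
      exact mul_le_mul (by nlinarith) (hA2 x ‖y‖ r h3 h2.le) (hnonneg x r hr) (by positivity)
    have step2 : ∫ y in S, ‖y‖ ^ 2 * ν x ‖y‖ ≤ Ifn n ν x r := by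
      refine setIntegral_mono_set (integrableOn_sq_ball hn hmeas hnonneg hint)
        (ae_restrict_of_ae (ae_nonneg_sq hn hnonneg)) (HasSubset.Subset.eventuallyLE diff_subset)
    rw [setIntegral_const, smul_eq_mul] at step1
    calc (r / 2) ^ 2 * ν x r * (volume S).toReal
        = (volume S).toReal * ((r / 2) ^ 2 * ν x r) := by ring
      _ ≤ Ifn n ν x r := step1.trans step2
  have hnu : 0 ≤ ν x r := hnonneg x r hr
  have hm : (r / 2) ^ 2 * ν x r * (1 / 2 * r ^ n * v)
      ≤ (r / 2) ^ 2 * ν x r * (volume S).toReal :=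
    mul_le_mul_of_nonneg_left hvolS' (by positivity)
  have hfinal : ν x r * (r ^ n * v) * r ^ 2 ≤ 8 * Ifn n ν x r := by nlinarith [hm, hlow]
  rw [Kfun_eq]
  have e : 8 * (Ifn n ν x r / r ^ 2) = 8 * Ifn n ν x r / r ^ 2 := by ring
  rw [e, le_div_iff₀ (by positivity : (0:ℝ) < r ^ 2)]
  linarith [hfinal]

/-- Upper bound for the annulus integral of `‖y‖² ν`. -/
lemma ann_sq_upper (hn : 1 ≤ n) (hmeas : Measurable (Function.uncurry ν))
    (hnonneg : ∀ x r, 0 < r → 0 ≤ ν x r)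
    (hint : ∀ x : Eucl n, Integrable (fun y : Eucl n => min 1 (‖y‖ ^ 2) * ν x ‖y‖))
    (hA2 : CondA2 n ν) (hr : 0 < r) (hrR : r ≤ R) :
    (∫ y in Metric.ball (0 : Eucl n) R \ Metric.ball (0 : Eucl n) r, ‖y‖ ^ 2 * ν x ‖y‖)
      ≤ ν x r * (R ^ 2 * (R ^ n * (volume (Metric.ball (0 : Eucl n) 1)).toReal)) := by
  set v := (volume (Metric.ball (0 : Eucl n) 1)).toReal with hv
  have hR : 0 < R := lt_of_lt_of_le hr hrR
  have hAnn : MeasurableSet (Metric.ball (0 : Eucl n) R \ Metric.ball (0 : Eucl n) r) :=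
    measurableSet_ball.diff measurableSet_ball
  have step1 : (∫ y in Metric.ball (0 : Eucl n) R \ Metric.ball (0 : Eucl n) r,
      ‖y‖ ^ 2 * ν x ‖y‖) ≤ ∫ _y in Metric.ball (0 : Eucl n) R \ Metric.ball (0 : Eucl n) r,
      R ^ 2 * ν x r := by
    refine setIntegral_mono_on
      ((integrableOn_sq_ball hn hmeas hnonneg hint).mono_set diff_subset)
      (integrableOn_const (lt_of_le_of_lt (measure_mono diff_subset)
        measure_ball_lt_top).ne) hAnn ?_
    intro y hy
    have h1 : r ≤ ‖y‖ := notmem_ball_norm.mp hy.2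
    have h2 : ‖y‖ < R := mem_ball_norm.mp hy.1
    exact mul_le_mul (by nlinarith [norm_nonneg y]) (hA2 x r ‖y‖ hr h1)
      (hnonneg x ‖y‖ (lt_of_lt_of_le hr h1)) (by positivity)
  rw [setIntegral_const, smul_eq_mul] at step1
  have step2 : (volume (Metric.ball (0 : Eucl n) R \ Metric.ball (0 : Eucl n) r)).toReal
      ≤ R ^ n * v := by
    rw [← vol_ball_toReal hn hR.le]
    exact ENNReal.toReal_mono measure_ball_lt_top.ne (measure_mono diff_subset)
  have hnu : 0 ≤ ν x r := hnonneg x r hr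
  calc (∫ y in Metric.ball (0 : Eucl n) R \ Metric.ball (0 : Eucl n) r, ‖y‖ ^ 2 * ν x ‖y‖)
      ≤ (volume (Metric.ball (0 : Eucl n) R \ Metric.ball (0 : Eucl n) r)).toReal
        * (R ^ 2 * ν x r) := step1
    _ ≤ (R ^ n * v) * (R ^ 2 * ν x r) := by
        refine mul_le_mul_of_nonneg_right step2 (by positivity)
    _ = ν x r * (R ^ 2 * (R ^ n * v)) := by ring

/-- Scaling estimate for `K`. -/
lemma K_scale (hn : 1 ≤ n) (hmeas : Measurable (Function.uncurry ν))
    (hnonneg : ∀ x r, 0 < r → 0 ≤ ν x r)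
    (hint : ∀ x : Eucl n, Integrable (fun y : Eucl n => min 1 (‖y‖ ^ 2) * ν x ‖y‖))
    (hA2 : CondA2 n ν) (hr : 0 < r) (ht : 1 ≤ t) :
    Kfun n ν x (t * r) ≤ (1 + 8 * t ^ n) * Kfun n ν x r := by
  set v := (volume (Metric.ball (0 : Eucl n) 1)).toReal with hv
  have ht0 : 0 < t := lt_of_lt_of_le one_pos ht
  have hrtr : r ≤ t * r := le_mul_of_one_le_left hr.le ht
  have htr : 0 < t * r := lt_of_lt_of_le hr hrtr
  have hA := ann_sq_upper (x := x) hn hmeas hnonneg hint hA2 hr hrtr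
  have h8 := nu_le_K (x := x) hn hmeas hnonneg hint hA2 hr
  have hI0 := Ifn_nonneg (x := x) (r := r) hn hnonneg
  rw [Kfun_eq, Ifn_split hn hmeas hnonneg hint hrtr]
  calc (Ifn n ν x r + ∫ y in Metric.ball (0 : Eucl n) (t * r) \ Metric.ball (0 : Eucl n) r,
        ‖y‖ ^ 2 * ν x ‖y‖) / (t * r) ^ 2
      = Ifn n ν x r / (t * r) ^ 2
        + (∫ y in Metric.ball (0 : Eucl n) (t * r) \ Metric.ball (0 : Eucl n) r,
          ‖y‖ ^ 2 * ν x ‖y‖) / (t * r) ^ 2 := add_div _ _ _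
    _ ≤ Ifn n ν x r / r ^ 2
        + (ν x r * ((t * r) ^ 2 * ((t * r) ^ n * v))) / (t * r) ^ 2 := by
        gcongr
    _ = Kfun n ν x r + ν x r * ((t * r) ^ n * v) := by
        rw [Kfun_eq]
        congr 1
        rw [show ν x r * ((t * r) ^ 2 * ((t * r) ^ n * v))
            = (ν x r * ((t * r) ^ n * v)) * (t * r) ^ 2 by ring,
          mul_div_cancel_right₀ _ (by positivity : (0:ℝ) < (t * r) ^ 2).ne']
    _ ≤ Kfun n ν x r + t ^ n * (8 * Kfun n ν x r) := by
        have e : ν x r * ((t * r) ^ n * v) = t ^ n * (ν x r * (r ^ n * v)) := by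
          rw [mul_pow]; ring
        rw [e]
        have : t ^ n * (ν x r * (r ^ n * v)) ≤ t ^ n * (8 * Kfun n ν x r) :=
          mul_le_mul_of_nonneg_left h8 (by positivity)
        linarith
    _ = (1 + 8 * t ^ n) * Kfun n ν x r := by ring

/-- `h(r) ≤ t² K(tr) + h(tr)`. -/
lemma h_le_K_tr (hn : 1 ≤ n) (hmeas : Measurable (Function.uncurry ν))
    (hnonneg : ∀ x r, 0 < r → 0 ≤ ν x r)
    (hint : ∀ x : Eucl n, Integrable (fun y : Eucl n => min 1 (‖y‖ ^ 2) * ν x ‖y‖))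
    (hr : 0 < r) (ht : 1 ≤ t) :
    hfun n ν x r ≤ t ^ 2 * Kfun n ν x (t * r) + hfun n ν x (t * r) := by
  have ht0 : 0 < t := lt_of_lt_of_le one_pos ht
  have hrtr : r ≤ t * r := le_mul_of_one_le_left hr.le ht
  have htr : 0 < t * r := lt_of_lt_of_le hr hrtr
  rw [hfun_split hn hmeas hnonneg hint hr, hfun_split hn hmeas hnonneg hint htr,
    Lfn_split hn hmeas hnonneg hint hr hrtr]
  have hKt : 0 ≤ Kfun n ν x (t * r) := Kfun_nonneg hn hnonneg
  have hB : (∫ y in Metric.ball (0 : Eucl n) (t * r) \ Metric.ball (0 : Eucl n) r, ν x ‖y‖)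
      ≤ (∫ y in Metric.ball (0 : Eucl n) (t * r) \ Metric.ball (0 : Eucl n) r,
        ‖y‖ ^ 2 * ν x ‖y‖) / r ^ 2 := by
    rw [← integral_div]
    refine setIntegral_mono_on
      ((integrableOn_f_compl hn hmeas hnonneg hint hr).mono_set fun y hy => hy.2)
      (((integrableOn_sq_ball hn hmeas hnonneg hint).mono_set diff_subset).div_const _)
      (measurableSet_ball.diff measurableSet_ball) ?_
    intro y hy
    have h1 : r ≤ ‖y‖ := notmem_ball_norm.mp hy.2
    rw [le_div_iff₀ (by positivity)]
    have h0 : 0 ≤ ν x ‖y‖ := hnonneg x ‖y‖ (lt_of_lt_of_le hr h1)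
    have h2 : r ^ 2 ≤ ‖y‖ ^ 2 := by nlinarith
    calc ν x ‖y‖ * r ^ 2 ≤ ν x ‖y‖ * ‖y‖ ^ 2 := mul_le_mul_of_nonneg_left h2 h0
      _ = ‖y‖ ^ 2 * ν x ‖y‖ := mul_comm _ _
  have key : Kfun n ν x r
      + (∫ y in Metric.ball (0 : Eucl n) (t * r) \ Metric.ball (0 : Eucl n) r, ν x ‖y‖)
      ≤ t ^ 2 * Kfun n ν x (t * r) := by
    have e1 : Ifn n ν x r / r ^ 2
        + (∫ y in Metric.ball (0 : Eucl n) (t * r) \ Metric.ball (0 : Eucl n) r,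
          ‖y‖ ^ 2 * ν x ‖y‖) / r ^ 2 = Ifn n ν x (t * r) / r ^ 2 := by
      rw [Ifn_split hn hmeas hnonneg hint hrtr, add_div]
    have e2 : Ifn n ν x (t * r) / r ^ 2 = t ^ 2 * Kfun n ν x (t * r) := by
      rw [Kfun_eq]
      field_simp
    have e3 : Ifn n ν x r / r ^ 2
        + (∫ y in Metric.ball (0 : Eucl n) (t * r) \ Metric.ball (0 : Eucl n) r,
          ‖y‖ ^ 2 * ν x ‖y‖) / r ^ 2 = t ^ 2 * Kfun n ν x (t * r) := by
      rw [e1]; exact e2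
    rw [Kfun_eq]
    linarith [hB, e3]
  linarith

/-- Doubling estimate for `h` assuming `h ≤ C₁ K`. -/
lemma h_doubling (hn : 1 ≤ n) (hmeas : Measurable (Function.uncurry ν))
    (hnonneg : ∀ x r, 0 < r → 0 ≤ ν x r)
    (hint : ∀ x : Eucl n, Integrable (fun y : Eucl n => min 1 (‖y‖ ^ 2) * ν x ‖y‖))
    {C₁ : ℝ} (hC₁ : 0 < C₁)
    (hK : ∀ (r : ℝ), 0 < r → hfun n ν x r ≤ C₁ * Kfun n ν x r) (hr : 0 < r) :
    hfun n ν x (2 * r) ≤ (1 - 3 / (4 * C₁)) * hfun n ν x r := by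
  have h2r : (0 : ℝ) < 2 * r := by linarith
  have hrr : r ≤ 2 * r := by linarith
  have hs2 := hfun_split (x := x) hn hmeas hnonneg hint h2r
  have hs1 := hfun_split (x := x) hn hmeas hnonneg hint hr
  have hLs := Lfn_split (x := x) hn hmeas hnonneg hint hr hrr
  set A := ∫ y in Metric.ball (0 : Eucl n) (2 * r) \ Metric.ball (0 : Eucl n) r,
    ‖y‖ ^ 2 * ν x ‖y‖ with hA
  set B := ∫ y in Metric.ball (0 : Eucl n) (2 * r) \ Metric.ball (0 : Eucl n) r,
    ν x ‖y‖ with hB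
  have hAB : A ≤ 4 * r ^ 2 * B := by
    rw [hB, ← MeasureTheory.integral_const_mul]
    refine setIntegral_mono_on
      ((integrableOn_sq_ball hn hmeas hnonneg hint).mono_set diff_subset)
      (((integrableOn_f_compl hn hmeas hnonneg hint hr).mono_set
        fun y hy => hy.2).const_mul _)
      (measurableSet_ball.diff measurableSet_ball) ?_
    intro y hy
    have h1 : ‖y‖ < 2 * r := mem_ball_norm.mp hy.1
    have h2 : r ≤ ‖y‖ := notmem_ball_norm.mp hy.2
    have h3 : 0 ≤ ν x ‖y‖ := hnonneg x ‖y‖ (lt_of_lt_of_le hr h2)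
    have h4 : ‖y‖ ^ 2 ≤ 4 * r ^ 2 := by nlinarith
    calc ‖y‖ ^ 2 * ν x ‖y‖ ≤ 4 * r ^ 2 * ν x ‖y‖ := mul_le_mul_of_nonneg_right h4 h3
      _ = 4 * r ^ 2 * ν x ‖y‖ := rfl
  have key : Kfun n ν x (2 * r) ≤ 1 / 4 * Kfun n ν x r + B := by
    rw [Kfun_eq, Kfun_eq, Ifn_split hn hmeas hnonneg hint hrr, ← hA]
    rw [div_le_iff₀ (by positivity : (0:ℝ) < (2 * r) ^ 2)]
    have expand : (1 / 4 * (Ifn n ν x r / r ^ 2) + B) * (2 * r) ^ 2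
        = Ifn n ν x r + 4 * r ^ 2 * B := by
      field_simp
      ring
    rw [expand]
    linarith
  have F : 3 / (4 * C₁) * hfun n ν x r ≤ 3 / 4 * Kfun n ν x r := by
    have h1 := hK r hr
    have h2 : 3 / (4 * C₁) * hfun n ν x r ≤ 3 / (4 * C₁) * (C₁ * Kfun n ν x r) :=
      mul_le_mul_of_nonneg_left h1 (by positivity)
    have h3 : 3 / (4 * C₁) * (C₁ * Kfun n ν x r) = 3 / 4 * Kfun n ν x r := by
      field_simp
    linarith
  have expand2 : (1 - 3 / (4 * C₁)) * hfun n ν x r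
      = hfun n ν x r - 3 / (4 * C₁) * hfun n ν x r := by ring
  rw [expand2]
  linarith

end WS

/-- **Proposition 2.6** (equivalent formulations of the weak scaling condition). -/
theorem weak_scaling_equiv (n : ℕ) (hn : 1 ≤ n) (ν : Eucl n → ℝ → ℝ)
    (hmeas : Measurable (Function.uncurry ν)) (hnonneg : ∀ x r, 0 < r → 0 ≤ ν x r)
    (hint : ∀ x : Eucl n, Integrable (fun y : Eucl n => min 1 (‖y‖ ^ 2) * ν x ‖y‖))
    (hA1 : CondA1 n ν) (hA2 : CondA2 n ν) :
    (∃ α : ℝ, 0 < α ∧ ∃ cU : ℝ, 0 < cU ∧ CondA3 n ν cU α) ↔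
      (∃ C₁ : ℝ, 0 < C₁ ∧ ∀ (x : Eucl n) (r : ℝ), 0 < r →
        hfun n ν x r ≤ C₁ * Kfun n ν x r) := by
  constructor
  · rintro ⟨α, hα, cU, hcU, hA3⟩
    set t : ℝ := max 2 ((2 * cU) ^ (α⁻¹)) with htdef
    have ht2 : (2 : ℝ) ≤ t := le_max_left _ _
    have ht1 : (1 : ℝ) ≤ t := by linarith
    have ht0 : (0 : ℝ) < t := by linarith
    have hta : 2 * cU ≤ t ^ α := by
      have h1 : (((2 * cU) ^ (α⁻¹) : ℝ)) ^ α = 2 * cU := by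
        rw [← Real.rpow_mul (by positivity), inv_mul_cancel₀ hα.ne', Real.rpow_one]
      calc 2 * cU = (((2 * cU) ^ (α⁻¹) : ℝ)) ^ α := h1.symm
        _ ≤ t ^ α := Real.rpow_le_rpow (Real.rpow_nonneg (by positivity) _)
            (le_max_right _ _) hα.le
    have hhalf : cU * t ^ (-α) ≤ 1 / 2 := by
      rw [Real.rpow_neg ht0.le]
      have hp : (0 : ℝ) < t ^ α := Real.rpow_pos_of_pos ht0 α
      have hinv : (t ^ α)⁻¹ * t ^ α = 1 := inv_mul_cancel₀ hp.ne'
      have h2 : (0 : ℝ) ≤ (t ^ α)⁻¹ := by positivity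
      nlinarith
    refine ⟨2 * t ^ 2 * (1 + 8 * t ^ n), by positivity, fun x r hr => ?_⟩
    have F1 := WS.h_le_K_tr (x := x) hn hmeas hnonneg hint hr ht1
    have F2 := WS.K_scale (x := x) hn hmeas hnonneg hint hA2 hr ht1
    have F3 : hfun n ν x (t * r) ≤ 1 / 2 * hfun n ν x r := by
      have h5 := hA3 x r t hr ht1
      have hh0 : 0 ≤ hfun n ν x r := (WS.hfun_pos hn hmeas hnonneg hint hA1 hr).le
      calc hfun n ν x (t * r) ≤ cU * t ^ (-α) * hfun n ν x r := h5
        _ ≤ 1 / 2 * hfun n ν x r := mul_le_mul_of_nonneg_right hhalf hh0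
    have F5 : t ^ 2 * Kfun n ν x (t * r) ≤ t ^ 2 * ((1 + 8 * t ^ n) * Kfun n ν x r) :=
      mul_le_mul_of_nonneg_left F2 (by positivity)
    nlinarith [F1, F3, F5]
  · rintro ⟨C₁, hC₁, hK⟩
    have hC₁1 : (1 : ℝ) ≤ C₁ := by
      have h1 := hK 0 1 one_pos
      have h2 := WS.hfun_split (x := (0 : Eucl n)) hn hmeas hnonneg hint one_pos
      have h3 := WS.Lfn_nonneg (x := (0 : Eucl n)) (r := (1 : ℝ)) hn hnonneg
      have h4 := WS.Kfun_nonneg (x := (0 : Eucl n)) (r := (1 : ℝ)) hn hnonneg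
      have h5 := hA1 (0 : Eucl n)
      rw [h5] at h2 h1
      have hK1 : Kfun n ν 0 1 ≤ 1 := by linarith
      nlinarith
    set θ : ℝ := 1 - 3 / (4 * C₁) with hθdef
    have hfrac : (0 : ℝ) < 3 / (4 * C₁) := by positivity
    have hθpos : 0 < θ := by
      have h6 : 3 / (4 * C₁) ≤ 3 / 4 :=
        div_le_div_of_nonneg_left (by norm_num) (by norm_num) (by linarith)
      rw [hθdef]; linarith
    have hθlt1 : θ < 1 := by rw [hθdef]; linarith
    have hθinv : 1 < θ⁻¹ := (one_lt_inv₀ hθpos).mpr hθlt1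
    have hαpos : 0 < Real.logb 2 θ⁻¹ := Real.logb_pos one_lt_two hθinv
    refine ⟨Real.logb 2 θ⁻¹, hαpos, θ⁻¹, by positivity, ?_⟩
    set α := Real.logb 2 θ⁻¹ with hαdef
    have hpow2 : (2 : ℝ) ^ α = θ⁻¹ :=
      Real.rpow_logb two_pos (by norm_num) (by positivity)
    intro x r t hr ht
    have hdb : ∀ s : ℝ, 0 < s → hfun n ν x (2 * s) ≤ θ * hfun n ν x s := fun s hs =>
      WS.h_doubling hn hmeas hnonneg hint hC₁ (fun ρ hρ => hK x ρ hρ) hs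
    have hiter : ∀ k : ℕ, hfun n ν x ((2 : ℝ) ^ k * r) ≤ θ ^ k * hfun n ν x r := by
      intro k
      induction k with
      | zero => simp
      | succ k ih =>
        have hs : (0 : ℝ) < (2 : ℝ) ^ k * r := by positivity
        have h1 : ((2 : ℝ) ^ (k + 1) * r) = 2 * ((2 : ℝ) ^ k * r) := by ring
        rw [h1]
        calc hfun n ν x (2 * ((2 : ℝ) ^ k * r)) ≤ θ * hfun n ν x ((2 : ℝ) ^ k * r) := hdb _ hs
          _ ≤ θ * (θ ^ k * hfun n ν x r) := mul_le_mul_of_nonneg_left ih hθpos.le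
          _ = θ ^ (k + 1) * hfun n ν x r := by ring
    set k := ⌊Real.logb 2 t⌋₊ with hkdef
    have ht0 : (0 : ℝ) < t := lt_of_lt_of_le one_pos ht
    have hlogn : 0 ≤ Real.logb 2 t := Real.logb_nonneg one_lt_two ht
    have hk1 : (2 : ℝ) ^ k ≤ t := by
      calc (2 : ℝ) ^ k = (2 : ℝ) ^ (k : ℝ) := (Real.rpow_natCast 2 k).symm
        _ ≤ (2 : ℝ) ^ (Real.logb 2 t) :=
            Real.rpow_le_rpow_of_exponent_le one_le_two (Nat.floor_le hlogn)
        _ = t := Real.rpow_logb two_pos (by norm_num) ht0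
    have hk2 : t < (2 : ℝ) ^ (k + 1) := by
      calc t = (2 : ℝ) ^ (Real.logb 2 t) := (Real.rpow_logb two_pos (by norm_num) ht0).symm
        _ < (2 : ℝ) ^ ((k : ℝ) + 1) := by
            refine Real.rpow_lt_rpow_of_exponent_lt one_lt_two ?_
            exact_mod_cast Nat.lt_floor_add_one (Real.logb 2 t)
        _ = (2 : ℝ) ^ (k + 1) := by
            rw [show ((k : ℝ) + 1) = ((k + 1 : ℕ) : ℝ) by push_cast; ring, Real.rpow_natCast]
    have hmono : hfun n ν x (t * r) ≤ hfun n ν x ((2 : ℝ) ^ k * r) := by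
      refine WS.hfun_anti hn hmeas hnonneg hint (by positivity) ?_
      exact mul_le_mul_of_nonneg_right hk1 hr.le
    have hh0 : 0 ≤ hfun n ν x r := (WS.hfun_pos hn hmeas hnonneg hint hA1 hr).le
    have hθk : θ ^ k ≤ θ⁻¹ * t ^ (-α) := by
      have hp : (0 : ℝ) < t ^ α := Real.rpow_pos_of_pos ht0 α
      have e1 : ((2 : ℝ) ^ (k + 1 : ℕ)) ^ α = (θ⁻¹) ^ (k + 1 : ℕ) := by
        rw [← Real.rpow_natCast 2 (k + 1), ← Real.rpow_mul (by norm_num : (0:ℝ) ≤ 2), mul_comm,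
          Real.rpow_mul (by norm_num : (0:ℝ) ≤ 2), Real.rpow_natCast, hpow2]
      have e2 : t ^ α ≤ (θ⁻¹) ^ (k + 1 : ℕ) := by
        rw [← e1]
        exact Real.rpow_le_rpow ht0.le hk2.le hαpos.le
      have e3 : θ ^ (k + 1 : ℕ) ≤ (t ^ α)⁻¹ := by
        rw [show (θ : ℝ) ^ (k + 1 : ℕ) = ((θ⁻¹) ^ (k + 1 : ℕ))⁻¹ by rw [← inv_pow, inv_inv]]
        exact inv_anti₀ hp e2
      rw [Real.rpow_neg ht0.le]
      calc θ ^ k = θ⁻¹ * θ ^ (k + 1 : ℕ) := by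
            rw [pow_succ, mul_comm ((θ : ℝ) ^ k) θ, ← mul_assoc,
              inv_mul_cancel₀ hθpos.ne', one_mul]
        _ ≤ θ⁻¹ * (t ^ α)⁻¹ := mul_le_mul_of_nonneg_left e3 (by positivity)
    calc hfun n ν x (t * r) ≤ hfun n ν x ((2 : ℝ) ^ k * r) := hmono
      _ ≤ θ ^ k * hfun n ν x r := hiter k
      _ ≤ θ⁻¹ * t ^ (-α) * hfun n ν x r := mul_le_mul_of_nonneg_right hθk hh0
end
end
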